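/- arXiv:1909.06854 — 5 statements merged into one kernel-verified Lean document; each statement's English description precedes it below -/
import Mathlib

section
/- Assume x ≥ 0 and that at least one admissible control for (t, y) exists. Then the value V(t,x,y) = sSup { ∫_t^T P(s)·u(s) ds : u a control admissible for (t,y) } satisfies the level-set representation V(t,x,y) = sSup { z ∈ ℝ : z ≤ 0 and W(t,x,y,z) = 0 } + G(t,x), where the set { z ≤ 0 : W(t,x,y,z) = 0 } is nonempty. -/
open MeasureTheory Set intervalIntegral Metric
open scoped NNReal ENNReal

noncomputable section

/-- A control: measurable, valued in `[0, ubar]` a.e. on `[t, T]`. -/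
def IsControl (t T ubar : ℝ) (u : ℝ → ℝ) : Prop :=
  Measurable u ∧ ∀ᵐ s ∂(volume : Measure ℝ), s ∈ Set.Icc t T → u s ∈ Set.Icc 0 ubar

/-- Reservoir level `Y^{t,y,u}(s) = y + ∫_t^s (β(r) − u(r)) dr`. -/
def traj (t : ℝ) (β : ℝ → ℝ) (y : ℝ) (u : ℝ → ℝ) (s : ℝ) : ℝ :=
  y + ∫ r in t..s, (β r - u r)

/-- A control admissible for `(t, y)`: the trajectory stays in `K = [0, ybar]` on `[t, T]`. -/
def Admissible (t T ubar ybar : ℝ) (β : ℝ → ℝ) (y : ℝ) (u : ℝ → ℝ) : Prop :=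
  IsControl t T ubar u ∧ ∀ s ∈ Set.Icc t T, traj t β y u s ∈ Set.Icc 0 ybar

/-- Deterministic price `P(s) = x e^{b(s−t)}`. -/
def price (t x b s : ℝ) : ℝ := x * Real.exp (b * (s - t))

/-- Cost functional of the level-set (auxiliary) problem. -/
def levelCost (t T ubar ybar x b : ℝ) (β : ℝ → ℝ) (y z : ℝ) (u : ℝ → ℝ) : ℝ :=
  max (z - ∫ s in t..T, price t x b s * (u s - ubar)) 0
    + ∫ s in t..T, Metric.infDist (traj t β y u s) (Set.Icc 0 ybar)

/-- The level-set function `W`. -/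
def W (t T ubar ybar x b : ℝ) (β : ℝ → ℝ) (y z : ℝ) : ℝ :=
  sInf {c : ℝ | ∃ u, IsControl t T ubar u ∧ c = levelCost t T ubar ybar x b β y z u}

/-- `G(t,x) = ū ∫_t^T P(s) ds`. -/
def G (t T ubar x b : ℝ) : ℝ := ubar * ∫ s in t..T, price t x b s


/-- interval integrability from measurability and an a.e. bound -/
lemma aux_ii {f : ℝ → ℝ} (hf : Measurable f) {a b C : ℝ}
    (h : ∀ᵐ s ∂(volume.restrict (Set.uIoc a b)), |f s| ≤ C) :
    IntervalIntegrable f volume a b := by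
  rw [intervalIntegrable_iff]
  refine Measure.integrableOn_of_bounded (M := C) ?_ hf.aestronglyMeasurable ?_
  · show volume (Set.uIoc a b) ≠ ⊤
    rw [Set.uIoc]
    exact measure_Ioc_lt_top.ne
  · simpa [Real.norm_eq_abs] using h

lemma aux_ii' {f : ℝ → ℝ} (hf : Measurable f) {C : ℝ} (h : ∀ s, |f s| ≤ C) (a b : ℝ) :
    IntervalIntegrable f volume a b :=
  aux_ii hf (Filter.Eventually.of_forall fun s => h s)

lemma aux_ii_mul {f g : ℝ → ℝ} (hf : Continuous f) (hg : Measurable g) {a b C : ℝ}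
    (h : ∀ᵐ s ∂(volume.restrict (Set.uIoc a b)), |g s| ≤ C) :
    IntervalIntegrable (fun s => f s * g s) volume a b := by
  obtain ⟨C1, hC1⟩ := (isCompact_uIcc (a := a) (b := b)).exists_bound_of_continuousOn
    hf.continuousOn
  have hC1' : 0 ≤ C1 := le_trans (norm_nonneg _) (hC1 a left_mem_uIcc)
  refine aux_ii (hf.measurable.mul hg) (C := C1 * C) ?_
  filter_upwards [h, ae_restrict_mem measurableSet_uIoc] with s hs hmem
  rw [Pi.mul_apply, abs_mul]
  exact mul_le_mul (by simpa [Real.norm_eq_abs] using hC1 s (uIoc_subset_uIcc hmem))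
    hs (abs_nonneg _) hC1'

/-- a.e.-congruence on `[t,T]` gives equal interval integrals on subintervals. -/
lemma aux_congr {t T : ℝ} {f g : ℝ → ℝ}
    (h : ∀ᵐ r ∂(volume : Measure ℝ), r ∈ Set.Icc t T → f r = g r)
    {a b : ℝ} (hsub : Set.uIoc a b ⊆ Set.Icc t T) :
    ∫ r in a..b, f r = ∫ r in a..b, g r := by
  refine intervalIntegral.integral_congr_ae ?_
  filter_upwards [h] with r hr hmem
  exact hr (hsub hmem)

/-- max/min difference estimates -/
lemma aux_max_sub (a b a' b' : ℝ) : max a b - max a' b' ≤ max (a - a') (b - b') := by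
  rcases le_total a b with h | h
  · rw [max_eq_right h]
    calc b - max a' b' ≤ b - b' := by
          have := le_max_right a' b'; linarith
      _ ≤ _ := le_max_right _ _
  · rw [max_eq_left h]
    calc a - max a' b' ≤ a - a' := by
          have := le_max_left a' b'; linarith
      _ ≤ _ := le_max_left _ _

lemma aux_min_sub (a b a' b' : ℝ) : min a b - min a' b' ≤ max (a - a') (b - b') := by
  rcases le_total a' b' with h | h
  · rw [min_eq_left h]
    calc min a b - a' ≤ a - a' := by have := min_le_left a b; linarith
      _ ≤ _ := le_max_left _ _
  · rw [min_eq_right h]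
    calc min a b - b' ≤ b - b' := by have := min_le_right a b; linarith
      _ ≤ _ := le_max_right _ _

/-- membership window from small `infDist` to `Icc 0 ybar` -/
lemma aux_infDist_window {ybar v δ : ℝ} (hyb : 0 ≤ ybar)
    (h : Metric.infDist v (Set.Icc 0 ybar) ≤ δ) : -δ ≤ v ∧ v ≤ ybar + δ := by
  obtain ⟨k, hk, hdk⟩ := isCompact_Icc.exists_infDist_eq_dist
    (Set.nonempty_Icc.mpr hyb) v
  rw [hdk, Real.dist_eq] at h
  rcases hk with ⟨hk0, hk1⟩
  rcases abs_le.mp h with ⟨h1, h2⟩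
  constructor <;> linarith

/-- small integral of a nonneg Lipschitz function implies small sup -/
lemma aux_small_sup {t T L δ : ℝ} {d : ℝ → ℝ} (htT : t < T) (hL : 0 < L) (hδ : 0 < δ)
    (hd0 : ∀ s, 0 ≤ d s) (hlip : ∀ p q, |d p - d q| ≤ L * |p - q|)
    (hint : ∫ s in t..T, d s < min (δ^2/(4*L)) (δ*(T-t)/4)) :
    ∀ s ∈ Set.Icc t T, d s ≤ δ := by
  have hcont : Continuous d := by
    refine (LipschitzWith.of_dist_le_mul (K := L.toNNReal) fun p q => ?_).continuous
    rw [Real.dist_eq, Real.dist_eq, Real.coe_toNNReal _ hL.le]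
    exact hlip p q
  have hii : ∀ a b : ℝ, IntervalIntegrable d volume a b :=
    fun a b => hcont.intervalIntegrable a b
  by_contra hcon
  push_neg at hcon
  obtain ⟨s0, hs0, hds0⟩ := hcon
  set ρ : ℝ := min (δ/(2*L)) ((T-t)/2) with hρdef
  have hρ : 0 < ρ := lt_min (by positivity) (by linarith)
  obtain ⟨s1, hs1t, hs1T, hs1d⟩ : ∃ s1, t ≤ s1 ∧ s1 + ρ ≤ T ∧ ∀ r ∈ Set.Icc s1 (s1+ρ), |r - s0| ≤ ρ := by
    rcases le_total s0 ((t+T)/2) with h | h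
    · refine ⟨s0, hs0.1, ?_, fun r hr => ?_⟩
      · have : ρ ≤ (T-t)/2 := min_le_right _ _
        linarith
      · rw [abs_le]; constructor <;> [linarith [hr.1]; linarith [hr.2]]
    · refine ⟨s0 - ρ, ?_, by linarith [hs0.2], fun r hr => ?_⟩
      · have : ρ ≤ (T-t)/2 := min_le_right _ _
        linarith
      · rw [abs_le]
        constructor
        · linarith [hr.1]
        · have := hr.2; linarith
  have hlow : ∀ r ∈ Set.Icc s1 (s1+ρ), δ/2 ≤ d r := by
    intro r hr
    have h1 : |d r - d s0| ≤ L * |r - s0| := hlip r s0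
    have h2 : L * |r - s0| ≤ L * ρ := by
      have := hs1d r hr
      nlinarith [abs_nonneg (r - s0)]
    have h3 : L * ρ ≤ δ/2 := by
      have : ρ ≤ δ/(2*L) := min_le_left _ _
      calc L * ρ ≤ L * (δ/(2*L)) := by nlinarith
        _ = δ/2 := by field_simp
    rcases abs_le.mp h1 with ⟨ha, hb⟩
    linarith
  have e1 : (∫ s in t..s1, d s) + ∫ s in s1..T, d s = ∫ s in t..T, d s :=
    intervalIntegral.integral_add_adjacent_intervals (hii _ _) (hii _ _)
  have e2 : (∫ s in s1..(s1+ρ), d s) + ∫ s in (s1+ρ)..T, d s = ∫ s in s1..T, d s :=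
    intervalIntegral.integral_add_adjacent_intervals (hii _ _) (hii _ _)
  have p1 : (0:ℝ) ≤ ∫ s in t..s1, d s :=
    intervalIntegral.integral_nonneg hs1t (fun s _ => hd0 s)
  have p2 : (0:ℝ) ≤ ∫ s in (s1+ρ)..T, d s :=
    intervalIntegral.integral_nonneg hs1T (fun s _ => hd0 s)
  have p3 : ρ * (δ/2) ≤ ∫ s in s1..(s1+ρ), d s := by
    have := intervalIntegral.integral_mono_on (by linarith : s1 ≤ s1 + ρ)
      (intervalIntegrable_const) (hii _ _) hlow
    rw [intervalIntegral.integral_const] at this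
    simpa [smul_eq_mul] using this
  have hbig : min (δ^2/(4*L)) (δ*(T-t)/4) ≤ ∫ s in t..T, d s := by
    have : ρ * (δ/2) ≤ ∫ s in t..T, d s := by linarith
    refine le_trans ?_ this
    rw [hρdef]
    rcases le_total (δ/(2*L)) ((T-t)/2) with hc | hc
    · rw [min_eq_left hc]
      refine le_trans (min_le_left _ _) (le_of_eq ?_)
      field_simp
      ring
    · rw [min_eq_right hc]
      refine le_trans (min_le_right _ _) (le_of_eq ?_)
      ring
  linarith

lemma aux_price_cont (t x b : ℝ) : Continuous (price t x b) :=
  continuous_const.mul ((Real.continuous_exp).comp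
    (continuous_const.mul (continuous_id.sub continuous_const)))

lemma aux_price_nonneg {t x b : ℝ} (hx : 0 ≤ x) (s : ℝ) : 0 ≤ price t x b s :=
  mul_nonneg hx (Real.exp_pos _).le

lemma aux_price_le {t T x b : ℝ} (hx : 0 ≤ x) {s : ℝ} (hs : s ∈ Set.Icc t T) :
    price t x b s ≤ x * Real.exp (|b| * (T - t)) := by
  refine mul_le_mul_of_nonneg_left (Real.exp_le_exp.mpr ?_) hx
  calc b * (s - t) ≤ |b| * (s - t) :=
        mul_le_mul_of_nonneg_right (le_abs_self b) (by linarith [hs.1])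
    _ ≤ |b| * (T - t) := mul_le_mul_of_nonneg_left (by linarith [hs.2]) (abs_nonneg b)

lemma aux_price_deriv (t x b s : ℝ) :
    HasDerivAt (price t x b) (b * price t x b s) s := by
  have h1 : HasDerivAt (fun s : ℝ => b * (s - t)) b s := by
    simpa using ((hasDerivAt_id s).sub_const t).const_mul b
  have h2 := (Real.hasDerivAt_exp (b * (s - t))).comp s h1
  have h3 := h2.const_mul x
  simp only [price]
  rw [show b * (x * Real.exp (b * (s - t))) = x * (Real.exp (b * (s - t)) * b) by ring]
  exact h3

lemma aux_price_ftc {t x b : ℝ} (r R : ℝ) :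
    ∫ s in r..R, b * price t x b s = price t x b R - price t x b r :=
  intervalIntegral.integral_eq_sub_of_hasDerivAt
    (fun s _ => aux_price_deriv t x b s)
    ((continuous_const.mul (aux_price_cont t x b)).intervalIntegrable r R)

/-- Integration-by-parts style bound: if the primitive of `w` is small on `[t,T]`,
then `∫ P w` is small. -/
lemma aux_ibp {t T x b : ℝ} (htT : t ≤ T) (hx : 0 ≤ x) {w : ℝ → ℝ} {W0 : ℝ}
    (hw : Measurable w) (hwb : ∀ s, |w s| ≤ W0)
    {ε : ℝ} (hD : ∀ s ∈ Set.Icc t T, |∫ r in t..s, w r| ≤ ε) :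
    |∫ s in t..T, price t x b s * w s|
      ≤ x * Real.exp (|b| * (T - t)) * (1 + |b| * (T - t)) * ε := by
  set P := price t x b with hPdef
  set Cp := x * Real.exp (|b| * (T - t)) with hCp
  have hCp0 : 0 ≤ Cp := mul_nonneg hx (Real.exp_pos _).le
  have hε0 : 0 ≤ ε := le_trans (abs_nonneg _) (hD t ⟨le_refl t, htT⟩)
  have hW0 : 0 ≤ W0 := le_trans (abs_nonneg _) (hwb 0)
  have hPc : Continuous P := aux_price_cont t x b
  set D : ℝ → ℝ := fun s => ∫ r in t..s, w r with hDdef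
  have hDc : Continuous D :=
    intervalIntegral.continuous_primitive (fun a b' => aux_ii' hw hwb a b') t
  set μ : Measure ℝ := volume.restrict (Set.Ioc t T) with hμ
  haveI : IsFiniteMeasure μ := ⟨by
    rw [hμ, Measure.restrict_apply_univ]; exact measure_Ioc_lt_top⟩
  set F : ℝ → ℝ → ℝ := fun s r => if t ≤ r ∧ r ≤ s ∧ s ≤ T then b * P s * w r else 0
    with hF
  have hFmeas : Measurable (Function.uncurry F) := by
    refine Measurable.ite ?_ ?_ measurable_const
    · refine MeasurableSet.inter ?_ (MeasurableSet.inter ?_ ?_)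
      · exact measurableSet_le measurable_const measurable_snd
      · exact measurableSet_le measurable_snd measurable_fst
      · exact measurableSet_le measurable_fst measurable_const
    · exact ((continuous_const.mul (hPc.comp continuous_fst)).measurable).mul
        (hw.comp measurable_snd)
  have hFbd : ∀ p : ℝ × ℝ, |Function.uncurry F p| ≤ |b| * Cp * W0 := by
    rintro ⟨s, r⟩
    show |if t ≤ r ∧ r ≤ s ∧ s ≤ T then b * P s * w r else 0| ≤ _
    split_ifs with h
    · obtain ⟨h1, h2, h3⟩ := h
      rw [abs_mul, abs_mul]
      have hPs : |P s| ≤ Cp := by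
        rw [abs_of_nonneg (aux_price_nonneg hx s)]
        exact aux_price_le hx ⟨le_trans h1 h2, h3⟩
      exact mul_le_mul (mul_le_mul le_rfl hPs (abs_nonneg _) (abs_nonneg _))
        (hwb r) (abs_nonneg _) (mul_nonneg (abs_nonneg _) hCp0)
    · simpa using mul_nonneg (mul_nonneg (abs_nonneg b) hCp0) hW0
  have hInt : Integrable (Function.uncurry F) (μ.prod μ) :=
    ⟨hFmeas.aestronglyMeasurable, HasFiniteIntegral.of_bounded
      (Filter.Eventually.of_forall fun p => by
        simpa [Real.norm_eq_abs] using hFbd p)⟩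
  have hswap := MeasureTheory.integral_integral_swap hInt
  -- left side
  have hL : ∫ s, (∫ r, F s r ∂μ) ∂μ = ∫ s in Set.Ioc t T, b * P s * D s := by
    rw [hμ]
    refine setIntegral_congr_fun measurableSet_Ioc (fun s hs => ?_)
    have step1 : ∀ r ∈ Set.Ioc t T, F s r = (Set.Iic s).indicator (fun r => b * P s * w r) r := by
      intro r hr
      simp only [hF]
      by_cases h : r ≤ s
      · rw [if_pos ⟨hr.1.le, h, hs.2⟩, Set.indicator_of_mem (Set.mem_Iic.mpr h)]
      · rw [if_neg (fun hc => h hc.2.1), Set.indicator_of_notMem (fun hc => h (Set.mem_Iic.mp hc))]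
    calc ∫ r, F s r ∂μ = ∫ r in Set.Ioc t T, (Set.Iic s).indicator (fun r => b * P s * w r) r := by
          rw [hμ]; exact setIntegral_congr_fun measurableSet_Ioc step1
      _ = ∫ r in Set.Ioc t T ∩ Set.Iic s, b * P s * w r := setIntegral_indicator measurableSet_Iic
      _ = ∫ r in Set.Ioc t s, b * P s * w r := by rw [Set.Ioc_inter_Iic, min_eq_right hs.2]
      _ = b * P s * ∫ r in Set.Ioc t s, w r := by rw [MeasureTheory.integral_const_mul]
      _ = b * P s * D s := by
          rw [hDdef]
          congr 1
          exact (intervalIntegral.integral_of_le (le_trans hs.1.le (le_refl s))).symm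
  -- right side
  have hR : ∫ r, (∫ s, F s r ∂μ) ∂μ = ∫ r in Set.Ioc t T, (P T - P r) * w r := by
    rw [hμ]
    refine setIntegral_congr_fun measurableSet_Ioc (fun r hr => ?_)
    have step1 : ∀ s ∈ Set.Ioc t T, F s r = (Set.Ici r).indicator (fun s => b * P s * w r) s := by
      intro s hs
      simp only [hF]
      by_cases h : r ≤ s
      · rw [if_pos ⟨hr.1.le, h, hs.2⟩, Set.indicator_of_mem (Set.mem_Ici.mpr h)]
      · rw [if_neg (fun hc => h hc.2.1), Set.indicator_of_notMem (fun hc => h (Set.mem_Ici.mp hc))]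
    have hset : Set.Ioc t T ∩ Set.Ici r = Set.Icc r T := by
      ext s
      constructor
      · rintro ⟨⟨_, h2⟩, h3⟩; exact ⟨h3, h2⟩
      · rintro ⟨h1, h2⟩; exact ⟨⟨lt_of_lt_of_le hr.1 h1, h2⟩, h1⟩
    calc ∫ s, F s r ∂μ = ∫ s in Set.Ioc t T, (Set.Ici r).indicator (fun s => b * P s * w r) s := by
          rw [hμ]; exact setIntegral_congr_fun measurableSet_Ioc step1
      _ = ∫ s in Set.Ioc t T ∩ Set.Ici r, b * P s * w r := setIntegral_indicator measurableSet_Ici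
      _ = ∫ s in Set.Icc r T, b * P s * w r := by rw [hset]
      _ = (∫ s in Set.Icc r T, b * P s) * w r := by rw [MeasureTheory.integral_mul_const]
      _ = (∫ s in Set.Ioc r T, b * P s) * w r := by rw [integral_Icc_eq_integral_Ioc]
      _ = (∫ s in r..T, b * P s) * w r := by rw [intervalIntegral.integral_of_le hr.2]
      _ = (P T - P r) * w r := by rw [aux_price_ftc]
  -- integrabilities
  have iiw : IntervalIntegrable w volume t T := aux_ii' hw hwb t T
  have iiPw : IntervalIntegrable (fun s => P s * w s) volume t T :=
    aux_ii_mul hPc hw (Filter.Eventually.of_forall fun s => hwb s)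
  have iiPTw : IntervalIntegrable (fun r => P T * w r) volume t T := by
    simpa [mul_comm] using iiw.mul_const (P T)
  -- the integration by parts identity
  have hsplit : ∫ r in Set.Ioc t T, (P T - P r) * w r
      = P T * D T - ∫ s in Set.Ioc t T, P s * w s := by
    have e : ∀ r ∈ Set.Ioc t T, (P T - P r) * w r = P T * w r - P r * w r := by
      intro r _; ring
    rw [setIntegral_congr_fun measurableSet_Ioc e]
    rw [integral_sub ((intervalIntegrable_iff_integrableOn_Ioc_of_le htT).mp iiPTw)
      ((intervalIntegrable_iff_integrableOn_Ioc_of_le htT).mp iiPw)]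
    rw [MeasureTheory.integral_const_mul]
    congr 2
    rw [hDdef]
    exact (intervalIntegral.integral_of_le htT).symm
  have key : ∫ s in t..T, P s * w s
      = P T * D T - ∫ s in Set.Ioc t T, b * P s * D s := by
    have h1 : ∫ s in Set.Ioc t T, b * P s * D s
        = P T * D T - ∫ s in Set.Ioc t T, P s * w s := by
      rw [← hL, hswap, hR, hsplit]
    rw [intervalIntegral.integral_of_le htT]
    linarith
  -- bounds
  have hDT : |D T| ≤ ε := hD T ⟨htT, le_refl T⟩
  have hPT : |P T| ≤ Cp := by
    rw [abs_of_nonneg (aux_price_nonneg hx T)]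
    exact aux_price_le hx ⟨htT, le_refl T⟩
  have hbd2 : |∫ s in Set.Ioc t T, b * P s * D s| ≤ |b| * Cp * ε * (T - t) := by
    have h := norm_setIntegral_le_of_norm_le_const_ae
      (μ := volume) (s := Set.Ioc t T) (f := fun s => b * P s * D s)
      (C := |b| * Cp * ε) (by exact measure_Ioc_lt_top) ?_
    · rw [Real.norm_eq_abs] at h
      refine h.trans (le_of_eq ?_)
      rw [Real.volume_real_Ioc_of_le htT]
    · filter_upwards [ae_restrict_mem measurableSet_Ioc] with s hs
      rw [Real.norm_eq_abs, abs_mul, abs_mul]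
      have h1 : |P s| ≤ Cp := by
        rw [abs_of_nonneg (aux_price_nonneg hx s)]
        exact aux_price_le hx ⟨hs.1.le, hs.2⟩
      have h2 : |D s| ≤ ε := hD s ⟨hs.1.le, hs.2⟩
      exact mul_le_mul (mul_le_mul le_rfl h1 (abs_nonneg _) (abs_nonneg _)) h2
        (abs_nonneg _) (mul_nonneg (abs_nonneg _) hCp0)
  calc |∫ s in t..T, P s * w s|
      = |P T * D T - ∫ s in Set.Ioc t T, b * P s * D s| := by rw [key]
    _ ≤ |P T * D T| + |∫ s in Set.Ioc t T, b * P s * D s| := abs_sub _ _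
    _ ≤ Cp * ε + |b| * Cp * ε * (T - t) := by
        refine add_le_add ?_ hbd2
        rw [abs_mul]
        exact mul_le_mul hPT hDT (abs_nonneg _) hCp0
    _ = Cp * (1 + |b| * (T - t)) * ε := by ring

lemma ctrl_of_monotone_lipschitz {c : ℝ} (hc : 0 ≤ c) (f : ℝ → ℝ)
    (hm : Monotone f) (hl : ∀ a b : ℝ, a ≤ b → f b - f a ≤ c * (b - a)) :
    ∃ v : ℝ → ℝ, Measurable v ∧ (∀ s, v s ∈ Set.Icc 0 c) ∧
      ∀ a b : ℝ, a ≤ b → ∫ s in a..b, v s = f b - f a := by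
  have hlip : LipschitzWith c.toNNReal f := by
    apply LipschitzWith.of_dist_le_mul
    intro p q
    rcases le_total p q with h | h
    · rw [Real.dist_eq, Real.dist_eq, abs_of_nonpos (by linarith [hm h]),
        abs_of_nonpos (by linarith)]
      have := hl p q h
      rw [Real.coe_toNNReal _ hc]; nlinarith
    · rw [Real.dist_eq, Real.dist_eq, abs_of_nonneg (by linarith [hm h]),
        abs_of_nonneg (by linarith)]
      have := hl q p h
      rw [Real.coe_toNNReal _ hc]; nlinarith
  have hcont : Continuous f := hlip.continuous
  set g : ℝ → ℝ := fun s => c * s - f s with hg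
  have hgm : Monotone g := by
    intro p q h
    have := hl p q h
    simp only [hg]; nlinarith
  have hgc : Continuous g := (continuous_const.mul continuous_id).sub hcont
  set S1 : StieltjesFunction ℝ := ⟨f, hm, fun z => hcont.continuousWithinAt⟩ with hS1
  set S2 : StieltjesFunction ℝ := ⟨g, hgm, fun z => hgc.continuousWithinAt⟩ with hS2
  set μ := S1.measure
  set ν := S2.measure
  have hIoc : ∀ a b : ℝ, a < b → (μ + ν) (Ioc a b) = ((c.toNNReal : ℝ≥0) • (volume : Measure ℝ)) (Ioc a b) := by
    intro a b hab
    rw [Measure.add_apply, StieltjesFunction.measure_Ioc, StieltjesFunction.measure_Ioc,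
      Measure.smul_apply, Real.volume_Ioc]
    show ENNReal.ofReal (f b - f a) + ENNReal.ofReal (g b - g a)
        = c.toNNReal • ENNReal.ofReal (b - a)
    rw [← ENNReal.ofReal_add (by linarith [hm hab.le]) (by linarith [hgm hab.le]),
      ENNReal.smul_def, smul_eq_mul]
    show _ = ENNReal.ofReal c * ENNReal.ofReal (b - a)
    rw [← ENNReal.ofReal_mul hc]
    congr 1
    simp only [hg]; ring
  have key : μ + ν = (c.toNNReal : ℝ≥0) • (volume : Measure ℝ) := by
    refine Measure.ext_of_Ioc' (μ + ν) _ (fun a b hab => ?_) hIoc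
    rw [Measure.add_apply, StieltjesFunction.measure_Ioc, StieltjesFunction.measure_Ioc]
    exact ENNReal.add_ne_top.mpr ⟨ENNReal.ofReal_ne_top, ENNReal.ofReal_ne_top⟩
  have hle : μ ≤ (c.toNNReal : ℝ≥0) • (volume : Measure ℝ) :=
    (Measure.le_add_right le_rfl).trans key.le
  have hac : μ ≪ (volume : Measure ℝ) := by
    refine Measure.AbsolutelyContinuous.mk fun E hE h0 => ?_
    have := hle E
    simp only [Measure.smul_apply, h0, smul_zero] at this
    exact le_antisymm this zero_le
  have hbd : ∀ᵐ s ∂(volume : Measure ℝ), μ.rnDeriv volume s ≤ ENNReal.ofReal c := by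
    have h1 := Measure.rnDeriv_add' μ ν (volume : Measure ℝ)
    have h2 := Measure.rnDeriv_smul_left' (volume : Measure ℝ) (volume : Measure ℝ) c.toNNReal
    have h3 := Measure.rnDeriv_self (volume : Measure ℝ)
    rw [key] at h1
    filter_upwards [h1, h2, h3] with s e1 e2 e3
    have e1' : (c.toNNReal • (volume : Measure ℝ)).rnDeriv volume s
        = μ.rnDeriv volume s + ν.rnDeriv volume s := e1
    have : μ.rnDeriv volume s + ν.rnDeriv volume s = ENNReal.ofReal c := by
      rw [← e1', e2]
      simp only [Pi.smul_apply, e3, ENNReal.smul_def, smul_eq_mul, mul_one]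
      rfl
    calc μ.rnDeriv volume s ≤ μ.rnDeriv volume s + ν.rnDeriv volume s := le_self_add
      _ = ENNReal.ofReal c := this
  set v0 : ℝ → ℝ := fun s => (μ.rnDeriv volume s).toReal with hv0
  refine ⟨fun s => max 0 (min (v0 s) c), (measurable_const.max
    (((Measure.measurable_rnDeriv μ volume).ennreal_toReal).min measurable_const)),
    fun s => ⟨le_max_left _ _, max_le hc (min_le_right _ _)⟩, fun a b hab => ?_⟩
  have hve : ∀ᵐ s ∂(volume : Measure ℝ), max 0 (min (v0 s) c) = v0 s := by
    filter_upwards [hbd] with s hs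
    have h1 : v0 s ≤ c := by
      rw [hv0]
      calc (μ.rnDeriv volume s).toReal ≤ (ENNReal.ofReal c).toReal :=
        ENNReal.toReal_mono ENNReal.ofReal_ne_top hs
      _ = c := ENNReal.toReal_ofReal hc
    rw [min_eq_left h1, max_eq_right ENNReal.toReal_nonneg]
  rw [intervalIntegral.integral_congr_ae (by filter_upwards [hve] with s hs; exact fun _ => hs),
    intervalIntegral.integral_of_le hab]
  have hfin : ∀ᵐ s ∂(volume.restrict (Ioc a b)), μ.rnDeriv volume s < ⊤ := by
    refine ae_restrict_of_ae ?_
    filter_upwards [hbd] with s hs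
    exact hs.trans_lt ENNReal.ofReal_lt_top
  rw [hv0]
  rw [integral_toReal ((Measure.measurable_rnDeriv μ volume).aemeasurable.restrict) hfin,
    Measure.setLIntegral_rnDeriv hac (Ioc a b), StieltjesFunction.measure_Ioc]
  exact ENNReal.toReal_ofReal (by linarith [hm hab])


lemma aux_strong {t T ubar : ℝ} (hub : 0 ≤ ubar) {u : ℝ → ℝ} (hc : IsControl t T ubar u) :
    ∃ u' : ℝ → ℝ, Measurable u' ∧ (∀ s, u' s ∈ Set.Icc 0 ubar) ∧
      (∀ᵐ s ∂(volume : Measure ℝ), s ∈ Set.Icc t T → u' s = u s) := by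
  refine ⟨fun s => if s ∈ Set.Icc t T then max 0 (min (u s) ubar) else 0, ?_, ?_, ?_⟩
  · exact Measurable.ite measurableSet_Icc
      (measurable_const.max (hc.1.min measurable_const)) measurable_const
  · intro s
    by_cases h : s ∈ Set.Icc t T
    · show (if s ∈ Set.Icc t T then max 0 (min (u s) ubar) else 0) ∈ Set.Icc 0 ubar
      rw [if_pos h]
      exact ⟨le_max_left _ _, max_le hub (min_le_right _ _)⟩
    · show (if s ∈ Set.Icc t T then max 0 (min (u s) ubar) else 0) ∈ Set.Icc 0 ubar
      rw [if_neg h]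
      exact ⟨le_refl 0, hub⟩
  · filter_upwards [hc.2] with s hs hmem
    show (if s ∈ Set.Icc t T then max 0 (min (u s) ubar) else 0) = u s
    rw [if_pos hmem, min_eq_left (hs hmem).2, max_eq_right (hs hmem).1]

lemma aux_traj_eq {t y : ℝ} {β u : ℝ → ℝ} (hβ : Measurable β) {M : ℝ} (hβb : ∀ s, |β s| ≤ M)
    (hu : Measurable u) {C : ℝ} (hub : ∀ s, |u s| ≤ C) (s : ℝ) :
    traj t β y u s = y + (∫ r in t..s, β r) - ∫ r in t..s, u r := by
  rw [traj, intervalIntegral.integral_sub (aux_ii' hβ hβb t s) (aux_ii' hu hub t s)]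
  ring

lemma aux_traj_lip {t y : ℝ} {β u : ℝ → ℝ} (hβ : Measurable β) {M : ℝ} (hβb : ∀ s, |β s| ≤ M)
    (hu : Measurable u) {C : ℝ} (hub : ∀ s, |u s| ≤ C) (p q : ℝ) :
    |traj t β y u p - traj t β y u q| ≤ (M + C) * |p - q| := by
  have hib : ∀ s : ℝ, |β s - u s| ≤ M + C :=
    fun s => (abs_sub _ _).trans (add_le_add (hβb s) (hub s))
  have hii : ∀ a b : ℝ, IntervalIntegrable (fun r => β r - u r) volume a b :=
    aux_ii' (hβ.sub hu) hib
  have hsplit : traj t β y u p - traj t β y u q = ∫ r in q..p, (β r - u r) := by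
    rw [traj, traj, ← intervalIntegral.integral_add_adjacent_intervals (hii t q) (hii q p)]
    ring
  rw [hsplit, ← Real.norm_eq_abs]
  simpa [Real.norm_eq_abs, abs_sub_comm p q] using
    intervalIntegral.norm_integral_le_of_norm_le_const
      (C := M + C) (f := fun r => β r - u r) (a := q) (b := p)
      (fun s _ => by simpa [Real.norm_eq_abs] using hib s)

lemma aux_ctrl_ae_bound {t T ubar : ℝ} (htT : t ≤ T) {u : ℝ → ℝ} (hc : IsControl t T ubar u) :
    ∀ᵐ s ∂(volume.restrict (Set.uIoc t T)), |u s| ≤ ubar := by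
  have hsub : Set.uIoc t T ⊆ Set.Icc t T := by
    rw [Set.uIoc_of_le htT]; exact Set.Ioc_subset_Icc_self
  filter_upwards [ae_restrict_of_ae hc.2, ae_restrict_mem measurableSet_uIoc] with s h1 h2
  have h3 := h1 (hsub h2)
  rw [abs_of_nonneg h3.1]
  exact h3.2

/-- Theorem 5.1 (deterministic-price instance): level-set representation of the value. -/
theorem stmt0 (t T ubar ybar b x y : ℝ) (β : ℝ → ℝ)
    (ht : 0 ≤ t) (htT : t ≤ T) (hub : 0 < ubar) (hyb : 0 < ybar)
    (hβm : Measurable β) (hβb : ∃ M, ∀ s, |β s| ≤ M)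
    (hx : 0 ≤ x) (hadm : ∃ u, Admissible t T ubar ybar β y u) :
    {z : ℝ | z ≤ 0 ∧ W t T ubar ybar x b β y z = 0}.Nonempty ∧
      sSup {v : ℝ | ∃ u, Admissible t T ubar ybar β y u ∧
            v = ∫ s in t..T, price t x b s * u s}
        = sSup {z : ℝ | z ≤ 0 ∧ W t T ubar ybar x b β y z = 0} + G t T ubar x b := by
  classical
  obtain ⟨M, hβb⟩ := hβb
  have hM0 : 0 ≤ M := le_trans (abs_nonneg _) (hβb 0)
  obtain ⟨u₀, hadm₀⟩ := hadm
  set A := {v : ℝ | ∃ u, Admissible t T ubar ybar β y u ∧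
      v = ∫ s in t..T, price t x b s * u s} with hA
  set Z := {z : ℝ | z ≤ 0 ∧ W t T ubar ybar x b β y z = 0} with hZ
  -- basic cost facts
  have hczero : IsControl t T ubar (fun _ => (0:ℝ)) :=
    ⟨measurable_const, Filter.Eventually.of_forall fun s _ => ⟨le_refl 0, hub.le⟩⟩
  have cost_nonneg : ∀ z u, 0 ≤ levelCost t T ubar ybar x b β y z u := fun z u =>
    add_nonneg (le_max_right _ _)
      (intervalIntegral.integral_nonneg htT (fun s _ => Metric.infDist_nonneg))
  have SzNe : ∀ z : ℝ, {c : ℝ | ∃ u, IsControl t T ubar u ∧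
      c = levelCost t T ubar ybar x b β y z u}.Nonempty :=
    fun z => ⟨_, ⟨_, hczero, rfl⟩⟩
  have SzBdd : ∀ z : ℝ, BddBelow {c : ℝ | ∃ u, IsControl t T ubar u ∧
      c = levelCost t T ubar ybar x b β y z u} :=
    fun z => ⟨0, by rintro c ⟨u, hu, rfl⟩; exact cost_nonneg z u⟩
  have hWnn : ∀ z : ℝ, 0 ≤ W t T ubar ybar x b β y z :=
    fun z => le_csInf (SzNe z) (by rintro c ⟨u, hu, rfl⟩; exact cost_nonneg z u)
  -- integrability facts for controls
  have hPii : IntervalIntegrable (fun s => price t x b s * ubar) volume t T :=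
    ((aux_price_cont t x b).mul continuous_const).intervalIntegrable t T
  have hPuii : ∀ {u : ℝ → ℝ}, IsControl t T ubar u →
      IntervalIntegrable (fun s => price t x b s * u s) volume t T :=
    fun hu => aux_ii_mul (aux_price_cont t x b) hu.1 (aux_ctrl_ae_bound htT hu)
  -- `G` rewrite
  have hGeq : ∀ {u : ℝ → ℝ}, IsControl t T ubar u →
      ∫ s in t..T, price t x b s * (u s - ubar)
        = (∫ s in t..T, price t x b s * u s) - G t T ubar x b := by
    intro u hu
    have : ∀ s, price t x b s * (u s - ubar)
        = price t x b s * u s - price t x b s * ubar := fun s => by ring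
    rw [intervalIntegral.integral_congr (fun s _ => this s),
      intervalIntegral.integral_sub (hPuii hu) hPii, G,
      intervalIntegral.integral_mul_const, mul_comm]
  -- value of admissible controls is at most G
  have val_le_G : ∀ u : ℝ → ℝ, Admissible t T ubar ybar β y u →
      (∫ s in t..T, price t x b s * u s) ≤ G t T ubar x b := by
    intro u hu
    obtain ⟨u', hm', hb', hae'⟩ := aux_strong hub.le hu.1
    have he : ∫ s in t..T, price t x b s * u s = ∫ s in t..T, price t x b s * u' s := by
      refine aux_congr (t := t) (T := T) ?_ (by rw [Set.uIoc_of_le htT]; exact Set.Ioc_subset_Icc_self)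
      filter_upwards [hae'] with s hs hmem
      rw [hs hmem]
    rw [he]
    have hmono := intervalIntegral.integral_mono_on htT
      (aux_ii_mul (aux_price_cont t x b) hm'
        (Filter.Eventually.of_forall fun s => abs_le.mpr
          ⟨by linarith [(hb' s).1], (hb' s).2⟩)) hPii
      (fun s _ => mul_le_mul_of_nonneg_left (hb' s).2 (aux_price_nonneg hx s))
    rw [intervalIntegral.integral_mul_const, mul_comm] at hmono
    exact hmono
  -- admissible controls produce elements of Z
  have key_adm : ∀ u : ℝ → ℝ, Admissible t T ubar ybar β y u →
      (∫ s in t..T, price t x b s * u s) - G t T ubar x b ∈ Z := by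
    intro u hu
    refine ⟨by linarith [val_le_G u hu], ?_⟩
    refine le_antisymm (csInf_le (SzBdd _) ⟨u, hu.1, ?_⟩) (hWnn _)
    have hpen : ∫ s in t..T, Metric.infDist (traj t β y u s) (Set.Icc 0 ybar) = 0 := by
      rw [intervalIntegral.integral_congr (g := fun _ => (0:ℝ))
        (fun s hs => Metric.infDist_zero_of_mem
          (hu.2 s (by rwa [Set.uIcc_of_le htT] at hs)))]
      simp
    rw [levelCost, hpen, hGeq hu.1]
    simp
  have hZne : Z.Nonempty := ⟨_, key_adm u₀ hadm₀⟩
  have hAne : A.Nonempty := ⟨_, ⟨u₀, hadm₀, rfl⟩⟩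
  have hAbdd : BddAbove A := ⟨G t T ubar x b, by rintro v ⟨u, hu, rfl⟩; exact val_le_G u hu⟩
  have hZbdd : BddAbove Z := ⟨0, fun z hz => hz.1⟩
  refine ⟨hZne, le_antisymm ?_ ?_⟩
  · refine csSup_le hAne ?_
    rintro v ⟨u, hu, rfl⟩
    have h1 := le_csSup hZbdd (key_adm u hu)
    linarith
  · -- hard direction
    have hard : ∀ z ∈ Z, z ≤ sSup A - G t T ubar x b := by
      intro z hzmem
      obtain ⟨hz0, hWz⟩ := hzmem
      rcases htT.eq_or_lt with heq | hlt
      · -- degenerate case t = T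
        have hG0 : G t T ubar x b = 0 := by
          rw [G, ← heq, intervalIntegral.integral_same, mul_zero]
        have hA0 : A = {0} := by
          apply Set.eq_singleton_iff_unique_mem.mpr
          constructor
          · exact ⟨u₀, hadm₀, by rw [← heq, intervalIntegral.integral_same]⟩
          · rintro v ⟨u, hu, rfl⟩
            rw [← heq, intervalIntegral.integral_same]
        rw [hA0, csSup_singleton, hG0, sub_zero]
        exact hz0
      · -- main case t < T
        set Cp := x * Real.exp (|b| * (T - t)) with hCpdef
        have hCp0 : 0 ≤ Cp := mul_nonneg hx (Real.exp_pos _).le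
        set C₁ := Cp * (1 + |b| * (T - t)) with hC₁def
        have hb0 : (0:ℝ) ≤ |b| * (T - t) := mul_nonneg (abs_nonneg b) (by linarith)
        have hC₁0 : 0 ≤ C₁ := mul_nonneg hCp0 (by linarith)
        set L := M + ubar with hLdef
        have hL : 0 < L := by rw [hLdef]; linarith
        refine le_of_forall_sub_le ?_
        intro η hη
        set δ := η / (2 * (C₁ + 1)) with hδdef
        have hδ : 0 < δ := by rw [hδdef]; positivity
        set ε₀ := min (min (δ^2/(4*L)) (δ*(T-t)/4)) (η/2) with hε₀def
        have hε₀ : 0 < ε₀ := by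
          refine lt_min (lt_min (by positivity) ?_) (by positivity)
          have : 0 < T - t := by linarith
          positivity
        -- choose a nearly optimal control for the level-set problem
        have hWz' : sInf {c : ℝ | ∃ u, IsControl t T ubar u ∧
            c = levelCost t T ubar ybar x b β y z u} = 0 := hWz
        obtain ⟨c, ⟨u, hu, hceq⟩, hclt⟩ :=
          exists_lt_of_csInf_lt (SzNe z) (show sInf _ < ε₀ by rw [hWz']; exact hε₀)
        rw [hceq] at hclt
        have hpen_nn : 0 ≤ ∫ s in t..T, Metric.infDist (traj t β y u s) (Set.Icc 0 ybar) :=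
          intervalIntegral.integral_nonneg htT (fun s _ => Metric.infDist_nonneg)
        have hmax_lt : max (z - ∫ s in t..T, price t x b s * (u s - ubar)) 0 < ε₀ := by
          simp only [levelCost] at hclt
          linarith
        have hpen_lt : (∫ s in t..T, Metric.infDist (traj t β y u s) (Set.Icc 0 ybar)) < ε₀ := by
          simp only [levelCost] at hclt
          have := le_max_right (z - ∫ s in t..T, price t x b s * (u s - ubar)) 0
          linarith
        -- strongified controls
        obtain ⟨u', hm', hb', hae'⟩ := aux_strong hub.le hu
        have habs' : ∀ s, |u' s| ≤ ubar :=
          fun s => abs_le.mpr ⟨by linarith [(hb' s).1], (hb' s).2⟩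
        have htraj_eq : ∀ s ∈ Set.Icc t T, traj t β y u' s = traj t β y u s := by
          intro s hs
          rw [traj, traj]
          congr 1
          refine aux_congr (t := t) (T := T) ?_ ?_
          · filter_upwards [hae'] with r hr hmem
            rw [hr hmem]
          · rw [Set.uIoc_of_le hs.1]
            exact fun r hr => ⟨hr.1.le, hr.2.trans hs.2⟩
        have hpen' : (∫ s in t..T, Metric.infDist (traj t β y u' s) (Set.Icc 0 ybar)) < ε₀ := by
          rw [intervalIntegral.integral_congr
            (g := fun s => Metric.infDist (traj t β y u s) (Set.Icc 0 ybar))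
            (fun s hs => by rw [htraj_eq s (by rwa [Set.uIcc_of_le htT] at hs)])]
          exact hpen_lt
        -- smallness of distance to K along the trajectory of u'
        have hd : ∀ s ∈ Set.Icc t T,
            Metric.infDist (traj t β y u' s) (Set.Icc 0 ybar) ≤ δ := by
          refine aux_small_sup hlt hL hδ (fun s => Metric.infDist_nonneg) ?_ ?_
          · intro p q
            have h1 : |Metric.infDist (traj t β y u' p) (Set.Icc 0 ybar)
                - Metric.infDist (traj t β y u' q) (Set.Icc 0 ybar)|
                ≤ dist (traj t β y u' p) (traj t β y u' q) := by
              rw [abs_sub_le_iff]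
              constructor
              · have := Metric.infDist_le_infDist_add_dist
                  (x := traj t β y u' p) (y := traj t β y u' q) (s := Set.Icc 0 ybar)
                linarith
              · have := Metric.infDist_le_infDist_add_dist
                  (x := traj t β y u' q) (y := traj t β y u' p) (s := Set.Icc 0 ybar)
                rw [dist_comm] at this
                linarith
            refine h1.trans ?_
            rw [Real.dist_eq]
            exact aux_traj_lip hβm hβb hm' habs' p q
          · exact lt_of_lt_of_le hpen' (min_le_left _ _)
        have hwindow : ∀ s ∈ Set.Icc t T,
            -δ ≤ traj t β y u' s ∧ traj t β y u' s ≤ ybar + δ :=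
          fun s hs => aux_infDist_window hyb.le (hd s hs)
        obtain ⟨u₀', hm₀, hb₀, hae₀⟩ := aux_strong hub.le hadm₀.1
        have habs₀ : ∀ s, |u₀' s| ≤ ubar :=
          fun s => abs_le.mpr ⟨by linarith [(hb₀ s).1], (hb₀ s).2⟩
        have htraj₀ : ∀ s ∈ Set.Icc t T, traj t β y u₀' s = traj t β y u₀ s := by
          intro s hs
          rw [traj, traj]
          congr 1
          refine aux_congr (t := t) (T := T) ?_ ?_
          · filter_upwards [hae₀] with r hr hmem
            rw [hr hmem]
          · rw [Set.uIoc_of_le hs.1]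
            exact fun r hr => ⟨hr.1.le, hr.2.trans hs.2⟩
        -- cumulative discharge functions
        set F : ℝ → ℝ := fun s => ∫ r in t..s, u' r with hF
        set F0 : ℝ → ℝ := fun s => ∫ r in t..s, u₀' r with hF0
        set Ft : ℝ → ℝ := fun s => min (max (F0 s) (F s - δ)) (F s + δ) with hFt
        have hprop : ∀ v : ℝ → ℝ, Measurable v → (∀ s, |v s| ≤ ubar) →
            (∀ s, 0 ≤ v s) →
            (∀ a b' : ℝ, a ≤ b' → 0 ≤ (∫ r in t..b', v r) - (∫ r in t..a, v r) ∧
              (∫ r in t..b', v r) - (∫ r in t..a, v r) ≤ ubar * (b' - a)) := by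
          intro v hvm hvb hv0 a b' hab
          have hsplit : (∫ r in t..b', v r) - (∫ r in t..a, v r) = ∫ r in a..b', v r := by
            rw [← intervalIntegral.integral_add_adjacent_intervals
              (aux_ii' hvm hvb t a) (aux_ii' hvm hvb a b')]
            ring
          rw [hsplit]
          constructor
          · exact intervalIntegral.integral_nonneg hab (fun s _ => hv0 s)
          · have := intervalIntegral.integral_mono_on hab (aux_ii' hvm hvb a b')
              intervalIntegrable_const (fun s _ => (abs_le.mp (hvb s)).2)
            rw [intervalIntegral.integral_const, smul_eq_mul] at this
            calc (∫ r in a..b', v r) ≤ (b' - a) * ubar := this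
              _ = ubar * (b' - a) := by ring
        have hFprop := hprop u' hm' habs' (fun s => (hb' s).1)
        have hF0prop := hprop u₀' hm₀ habs₀ (fun s => (hb₀ s).1)
        have hFtmono : Monotone Ft := by
          intro a b' hab
          exact min_le_min
            (max_le_max (by linarith [(hF0prop a b' hab).1]) (by linarith [(hFprop a b' hab).1]))
            (by linarith [(hFprop a b' hab).1])
        have hFtlip : ∀ a b' : ℝ, a ≤ b' → Ft b' - Ft a ≤ ubar * (b' - a) := by
          intro a b' hab
          have h1 := aux_min_sub (max (F0 b') (F b' - δ)) (F b' + δ)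
            (max (F0 a) (F a - δ)) (F a + δ)
          have h2 := aux_max_sub (F0 b') (F b' - δ) (F0 a) (F a - δ)
          have h3 := (hF0prop a b' hab).2
          have h4 := (hFprop a b' hab).2
          have h5 : max (F0 b') (F b' - δ) - max (F0 a) (F a - δ) ≤ ubar * (b' - a) := by
            refine h2.trans (max_le h3 (by linarith))
          refine h1.trans (max_le h5 (by linarith))
        have hFzero : F t = 0 := by
          simp only [hF]
          exact intervalIntegral.integral_same
        have hF0zero : F0 t = 0 := by
          simp only [hF0]
          exact intervalIntegral.integral_same
        have hFt_t : Ft t = 0 := by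
          simp only [hFt]
          rw [hFzero, hF0zero]
          rw [zero_sub, zero_add, max_eq_left (by linarith), min_eq_left (by linarith)]
        have hclose : ∀ s, |Ft s - F s| ≤ δ := by
          intro s
          refine abs_le.mpr ⟨?_, ?_⟩
          · have l1 : F s - δ ≤ max (F0 s) (F s - δ) := le_max_right _ _
            have l2 : F s - δ ≤ F s + δ := by linarith
            have := le_min l1 l2
            simp only [hFt]
            linarith
          · have := min_le_right (max (F0 s) (F s - δ)) (F s + δ)
            simp only [hFt]
            linarith
        -- feasibility of Ft
        have hfeas : ∀ s ∈ Set.Icc t T,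
            y + (∫ r in t..s, β r) - ybar ≤ Ft s ∧ Ft s ≤ y + ∫ r in t..s, β r := by
          intro s hs
          have h0 := hadm₀.2 s hs
          rw [← htraj₀ s hs, aux_traj_eq hβm hβb hm₀ habs₀ s] at h0
          obtain ⟨h0l, h0r⟩ := h0
          obtain ⟨h1l, h1r⟩ := hwindow s hs
          rw [aux_traj_eq hβm hβb hm' habs' s] at h1l h1r
          constructor
          · refine le_min (le_trans ?_ (le_max_left _ _)) ?_
            · simp only [hF0] at *
              linarith
            · simp only [hF] at *
              linarith
          · rcases le_total (F0 s) (F s - δ) with hcase | hcase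
            · have hm1 : min (max (F0 s) (F s - δ)) (F s + δ) ≤ F s - δ := by
                rw [max_eq_right hcase]
                exact min_le_left _ _
              simp only [hFt, hF] at *
              linarith
            · have hm1 : min (max (F0 s) (F s - δ)) (F s + δ) ≤ F0 s := by
                rw [max_eq_left hcase]
                exact min_le_left _ _
              simp only [hFt, hF0] at *
              linarith
        -- build the admissible control from Ft
        obtain ⟨ut, hutm, hutb, hutint⟩ :=
          ctrl_of_monotone_lipschitz hub.le Ft hFtmono (fun a b' h => hFtlip a b' h)
        have habsut : ∀ s, |ut s| ≤ ubar :=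
          fun s => abs_le.mpr ⟨by linarith [(hutb s).1], (hutb s).2⟩
        have htrajut : ∀ s ∈ Set.Icc t T,
            traj t β y ut s = y + (∫ r in t..s, β r) - Ft s := by
          intro s hs
          rw [aux_traj_eq hβm hβb hutm habsut s]
          have := hutint t s hs.1
          rw [this, hFt_t, sub_zero]
        have hadmut : Admissible t T ubar ybar β y ut := by
          refine ⟨⟨hutm, Filter.Eventually.of_forall fun s _ => hutb s⟩, fun s hs => ?_⟩
          rw [htrajut s hs]
          obtain ⟨hfl, hfr⟩ := hfeas s hs
          exact ⟨by linarith, by linarith⟩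
        -- compare the payoffs
        have hDbound : ∀ s ∈ Set.Icc t T, |∫ r in t..s, (ut r - u' r)| ≤ δ := by
          intro s hs
          have heq2 : ∫ r in t..s, (ut r - u' r) = Ft s - F s := by
            rw [intervalIntegral.integral_sub (aux_ii' hutm habsut t s)
              (aux_ii' hm' habs' t s)]
            rw [hutint t s hs.1, hFt_t, sub_zero]
          rw [heq2]
          exact hclose s
        have hwd : ∀ s, |ut s - u' s| ≤ ubar := by
          intro s
          refine abs_le.mpr ⟨?_, ?_⟩
          · linarith [(hutb s).1, (hb' s).2]
          · linarith [(hutb s).2, (hb' s).1]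
        have hibp := aux_ibp (b := b) htT hx (hutm.sub hm') hwd hDbound
        have hibp' : |∫ s in t..T, price t x b s * (ut s - u' s)| ≤ C₁ * δ := by
          rw [hC₁def, hCpdef]
          exact hibp
        have hsubint : ∫ s in t..T, price t x b s * (ut s - u' s)
            = (∫ s in t..T, price t x b s * ut s) - ∫ s in t..T, price t x b s * u' s := by
          rw [intervalIntegral.integral_congr
            (g := fun s => price t x b s * ut s - price t x b s * u' s)
            (fun s _ => by ring)]
          exact intervalIntegral.integral_sub
            (aux_ii_mul (aux_price_cont t x b) hutm (Filter.Eventually.of_forall habsut))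
            (aux_ii_mul (aux_price_cont t x b) hm' (Filter.Eventually.of_forall habs'))
        have hPu_eq : ∫ s in t..T, price t x b s * u s
            = ∫ s in t..T, price t x b s * u' s := by
          refine aux_congr (t := t) (T := T) ?_
            (by rw [Set.uIoc_of_le htT]; exact Set.Ioc_subset_Icc_self)
          filter_upwards [hae'] with s hs hmem
          rw [hs hmem]
        have hmemA : (∫ s in t..T, price t x b s * ut s) ∈ A := ⟨ut, hadmut, rfl⟩
        have hle1 : (∫ s in t..T, price t x b s * ut s) ≤ sSup A := le_csSup hAbdd hmemA
        rw [hsubint] at hibp'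
        obtain ⟨hibl, hibr⟩ := abs_le.mp hibp'
        have hzlt : z - (∫ s in t..T, price t x b s * u s) + G t T ubar x b < ε₀ := by
          have h6 : z - (∫ s in t..T, price t x b s * (u s - ubar)) < ε₀ :=
            lt_of_le_of_lt (le_max_left _ _) hmax_lt
          rw [hGeq hu] at h6
          linarith only [h6]
        have hC₁δ : C₁ * δ ≤ η / 2 := by
          have hne : (0:ℝ) < 2 * (C₁ + 1) := by linarith only [hC₁0]
          rw [hδdef, ← mul_div_assoc, div_le_div_iff₀ hne two_pos]
          linarith only [hη.le]
        have hε₀η : ε₀ ≤ η / 2 := min_le_right _ _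
        linarith only [hzlt, hPu_eq, hibl, hle1, hC₁δ, hε₀η]

    have h2 := csSup_le hZne hard
    linarith
end
end

section
/- Assume x ≥ 0 and that at least one admissible control for (t,y) exists. Then z* := sSup { z ∈ ℝ : z ≤ 0 and W(t,x,y,z) = 0 } satisfies W(t,x,y,z*) = 0; moreover there exists a control u* admissible for (t,y) with ∫_t^T P(s)·(u*(s) − ū) ds ≥ z*, and every such u* is optimal for the constrained problem: ∫_t^T P(s)·u*(s) ds = sSup { ∫_t^T P(s)·u(s) ds : u admissible for (t,y) }. -/
open MeasureTheory Set Filter Topology intervalIntegral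
open scoped BoundedContinuousFunction ENNReal NNReal

noncomputable section

namespace Cor54


/-- globally bounded control -/
def BddControl (ubar : ℝ) (u : ℝ → ℝ) : Prop :=
  Measurable u ∧ ∀ s, u s ∈ Set.Icc 0 ubar

def trunc (ubar : ℝ) (u : ℝ → ℝ) : ℝ → ℝ := fun s => max 0 (min (u s) ubar)

def cum (t : ℝ) (u : ℝ → ℝ) (s : ℝ) : ℝ := ∫ r in t..s, u r

lemma trunc_bdd {ubar : ℝ} (hub : 0 ≤ ubar) {u : ℝ → ℝ} (hu : Measurable u) :
    BddControl ubar (trunc ubar u) := by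
  refine ⟨measurable_const.max (hu.min measurable_const), fun s => ?_⟩
  exact ⟨le_max_left _ _, max_le hub (min_le_right _ _)⟩

lemma trunc_eq {ubar : ℝ} {u : ℝ → ℝ} {s : ℝ} (h : u s ∈ Set.Icc 0 ubar) :
    trunc ubar u s = u s := by
  rcases h with ⟨h1, h2⟩
  simp [trunc, min_eq_left h2, max_eq_right h1]

/-- generic interval integrability from a.e. bound -/
lemma II_of_bdd {f : ℝ → ℝ} {a c C : ℝ}
    (hf : Measurable f)
    (h : ∀ᵐ s ∂(volume : Measure ℝ), s ∈ Set.uIoc a c → |f s| ≤ C) :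
    IntervalIntegrable f volume a c := by
  rw [intervalIntegrable_iff]
  haveI : IsFiniteMeasure (volume.restrict (Set.uIoc a c)) := by
    constructor
    rw [Measure.restrict_apply_univ]
    exact measure_Ioc_lt_top
  refine ⟨hf.aestronglyMeasurable, HasFiniteIntegral.of_bounded (C := C) ?_⟩
  filter_upwards [ae_restrict_of_ae h, ae_restrict_mem measurableSet_uIoc] with s hs hm
  exact hs hm

lemma II_of_bdd_forall {f : ℝ → ℝ} {C : ℝ} (hf : Measurable f) (h : ∀ s, |f s| ≤ C)
    (a c : ℝ) : IntervalIntegrable f volume a c :=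
  II_of_bdd hf (ae_of_all _ (fun s _ => h s))

lemma BddControl.II {ubar : ℝ} {u : ℝ → ℝ} (hu : BddControl ubar u) (a c : ℝ) :
    IntervalIntegrable u volume a c := by
  refine II_of_bdd_forall hu.1 (C := max ubar 0) (fun s => ?_) a c
  rcases hu.2 s with ⟨h1, h2⟩
  rw [abs_of_nonneg h1]
  exact le_max_of_le_left h2

lemma cum_sub {t ubar : ℝ} {u : ℝ → ℝ} (hu : BddControl ubar u) (a c : ℝ) :
    cum t u c - cum t u a = ∫ s in a..c, u s := by
  have := integral_add_adjacent_intervals (hu.II t a) (hu.II a c)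
  unfold cum
  linarith

lemma cum_mono {t ubar : ℝ} {u : ℝ → ℝ} (hu : BddControl ubar u) : Monotone (cum t u) := by
  intro a c hac
  have h := cum_sub (t := t) hu a c
  have : 0 ≤ ∫ s in a..c, u s :=
    intervalIntegral.integral_nonneg hac (fun s _ => (hu.2 s).1)
  linarith

lemma cum_lip {t ubar : ℝ} {u : ℝ → ℝ} (hu : BddControl ubar u) {a c : ℝ} (hac : a ≤ c) :
    cum t u c - cum t u a ≤ ubar * (c - a) := by
  rw [cum_sub hu a c]
  have h2 : ∫ s in a..c, u s ≤ ∫ _s in a..c, ubar :=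
    intervalIntegral.integral_mono_on hac (hu.II a c) intervalIntegrable_const
      (fun s _ => (hu.2 s).2)
  rw [intervalIntegral.integral_const, smul_eq_mul] at h2
  linarith [h2]

lemma cum_cont {t ubar : ℝ} {u : ℝ → ℝ} (hu : BddControl ubar u) : Continuous (cum t u) :=
  intervalIntegral.continuous_primitive (fun a c => hu.II a c) t

lemma cum_zero (t : ℝ) (u : ℝ → ℝ) : cum t u t = 0 := by simp [cum]



variable {t T ubar ybar b x y : ℝ} {β : ℝ → ℝ}

lemma price_cont : Continuous (price t x b) := by
  unfold price
  fun_prop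

lemma price_nonneg (hx : 0 ≤ x) (s : ℝ) : 0 ≤ price t x b s :=
  mul_nonneg hx (Real.exp_pos _).le

lemma price_abs_le (hx : 0 ≤ x) {s : ℝ} (hs : s ∈ Set.Icc t T) :
    |price t x b s| ≤ x * Real.exp (|b| * (T - t)) := by
  rw [abs_of_nonneg (price_nonneg hx s)]
  refine mul_le_mul_of_nonneg_left (Real.exp_le_exp.2 ?_) hx
  calc b * (s - t) ≤ |b| * (s - t) :=
        mul_le_mul_of_nonneg_right (le_abs_self b) (by linarith [hs.1])
    _ ≤ |b| * (T - t) := mul_le_mul_of_nonneg_left (by linarith [hs.2]) (abs_nonneg b)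

/-- integrand `price * (u - ubar)` is interval integrable for a control -/
lemma II_price_control (htT : t ≤ T) (hub : 0 ≤ ubar) {u : ℝ → ℝ}
    (hu : IsControl t T ubar u) {s' : ℝ} (hs' : s' ∈ Set.Icc t T) :
    IntervalIntegrable (fun s => price t x b s * u s) volume t s' := by
  refine II_of_bdd (price_cont.measurable.mul hu.1)
    (C := (|x| * Real.exp (|b| * (T - t))) * ubar) ?_
  have h1 : ∀ᵐ s ∂(volume : Measure ℝ), s ∈ Set.uIoc t s' → |price t x b s * u s|
      ≤ |x| * Real.exp (|b| * (T - t)) * ubar := by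
    filter_upwards [hu.2] with s hs hmem
    rw [Set.uIoc_of_le hs'.1] at hmem
    have hsIcc : s ∈ Set.Icc t T := ⟨hmem.1.le, hmem.2.trans hs'.2⟩
    have hb := hs hsIcc
    rw [abs_mul]
    have h2 : |price t x b s| ≤ |x| * Real.exp (|b| * (T - t)) := by
      have := price_abs_le (t := t) (T := T) (b := b) (x := |x|) (abs_nonneg x) hsIcc
      calc |price t x b s| = |x| * Real.exp (b * (s - t)) := by
            rw [price, abs_mul, abs_of_nonneg (Real.exp_pos _).le]
        _ ≤ |x| * Real.exp (|b| * (T - t)) := by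
            refine mul_le_mul_of_nonneg_left (Real.exp_le_exp.2 ?_) (abs_nonneg x)
            calc b * (s - t) ≤ |b| * (s - t) :=
                  mul_le_mul_of_nonneg_right (le_abs_self b) (by linarith [hsIcc.1])
              _ ≤ |b| * (T - t) := mul_le_mul_of_nonneg_left (by linarith [hsIcc.2]) (abs_nonneg b)
    refine mul_le_mul h2 ?_ (abs_nonneg _) (by positivity)
    rw [abs_of_nonneg hb.1]; exact hb.2
  exact h1


end Cor54
namespace Cor54

variable {t T ubar ybar b x y : ℝ} {β : ℝ → ℝ}

/-- the profit integral -/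
def Jint (t T ubar x b : ℝ) (u : ℝ → ℝ) : ℝ :=
  ∫ s in t..T, price t x b s * (u s - ubar)

lemma II_price_const (a c : ℝ) : IntervalIntegrable (fun s => price t x b s * ubar) volume a c :=
  (price_cont.mul continuous_const).intervalIntegrable a c

lemma II_price_sub (htT : t ≤ T) (hub : 0 ≤ ubar) {u : ℝ → ℝ}
    (hu : IsControl t T ubar u) :
    IntervalIntegrable (fun s => price t x b s * (u s - ubar)) volume t T := by
  have h1 := II_price_control (x := x) (b := b) htT hub hu (Set.right_mem_Icc.2 htT)
  have h2 := II_price_const (t := t) (x := x) (b := b) (ubar := ubar) t T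
  have := h1.sub h2
  simpa [mul_sub] using this

lemma Jint_split (htT : t ≤ T) (hub : 0 ≤ ubar) {u : ℝ → ℝ} (hu : IsControl t T ubar u) :
    Jint t T ubar x b u
      = (∫ s in t..T, price t x b s * u s) - ubar * ∫ s in t..T, price t x b s := by
  have h1 := II_price_control (x := x) (b := b) htT hub hu (Set.right_mem_Icc.2 htT)
  have h2 := II_price_const (t := t) (x := x) (b := b) (ubar := ubar) t T
  have h3 : Jint t T ubar x b u
      = (∫ s in t..T, price t x b s * u s) - ∫ s in t..T, price t x b s * ubar := by
    rw [Jint, ← intervalIntegral.integral_sub h1 h2]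
    congr 1
    ext s
    ring
  rw [h3]
  congr 1
  rw [← intervalIntegral.integral_const_mul]
  congr 1
  ext s
  ring

lemma Jint_nonpos (htT : t ≤ T) (hub : 0 ≤ ubar) (hx : 0 ≤ x) {u : ℝ → ℝ}
    (hu : IsControl t T ubar u) : Jint t T ubar x b u ≤ 0 := by
  rw [Jint, intervalIntegral.integral_of_le htT]
  have hae : ∀ᵐ s ∂(volume.restrict (Set.Ioc t T)), price t x b s * (u s - ubar) ≤ 0 := by
    rw [ae_restrict_iff' measurableSet_Ioc]
    filter_upwards [hu.2] with s hs hmem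
    have hb := hs ⟨hmem.1.le, hmem.2⟩
    have : u s - ubar ≤ 0 := by linarith [hb.2]
    exact mul_nonpos_of_nonneg_of_nonpos (price_nonneg hx s) this
  exact integral_nonpos_of_ae hae

/-- any levelCost value is nonnegative -/
lemma levelCost_nonneg (htT : t ≤ T) (z : ℝ) (u : ℝ → ℝ) :
    0 ≤ levelCost t T ubar ybar x b β y z u := by
  have h1 : (0:ℝ) ≤ max (z - ∫ s in t..T, price t x b s * (u s - ubar)) 0 := le_max_right _ _
  have h2 : (0:ℝ) ≤ ∫ s in t..T, Metric.infDist (traj t β y u s) (Set.Icc 0 ybar) :=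
    intervalIntegral.integral_nonneg htT (fun s _ => Metric.infDist_nonneg)
  rw [levelCost]
  linarith

lemma W_nonneg (htT : t ≤ T) (hub : 0 ≤ ubar) (z : ℝ) : 0 ≤ W t T ubar ybar x b β y z := by
  refine le_csInf ⟨levelCost t T ubar ybar x b β y z (fun _ => 0),
    ⟨fun _ => 0, ⟨measurable_const, ae_of_all _ (fun s _ => ⟨le_rfl, hub⟩)⟩, rfl⟩⟩ ?_
  rintro c ⟨u, hu, rfl⟩
  exact levelCost_nonneg htT z u

lemma W_zero_of_admissible (htT : t ≤ T) (hub : 0 < ubar) {u : ℝ → ℝ}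
    (hu : Admissible t T ubar ybar β y u) {z : ℝ} (hz : z ≤ Jint t T ubar x b u) :
    W t T ubar ybar x b β y z = 0 := by
  have hcost : levelCost t T ubar ybar x b β y z u = 0 := by
    rw [levelCost]
    have h1 : max (z - ∫ s in t..T, price t x b s * (u s - ubar)) 0 = 0 :=
      max_eq_right (by rw [← Jint]; linarith)
    have h2 : (∫ s in t..T, Metric.infDist (traj t β y u s) (Set.Icc 0 ybar)) = 0 := by
      rw [intervalIntegral.integral_congr (g := fun _ => 0) ?_, intervalIntegral.integral_zero]
      intro s hs
      rw [Set.uIcc_of_le htT] at hs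
      exact Metric.infDist_zero_of_mem (hu.2 s hs)
    rw [h1, h2, add_zero]
  refine le_antisymm ?_ (W_nonneg htT hub.le z)
  rw [← hcost]
  exact csInf_le ⟨0, by rintro c ⟨v, hv, rfl⟩; exact levelCost_nonneg htT z v⟩
    ⟨u, hu.1, rfl⟩

end Cor54
namespace Cor54

variable {t T ubar ybar b x y : ℝ} {β : ℝ → ℝ}

/-- The constraint set in the space of bounded continuous functions on `[t,T]`. -/
def AA (t T ubar : ℝ) : Set (Set.Icc t T →ᵇ ℝ) :=
  {F | (∀ p : Set.Icc t T, (p : ℝ) = t → F p = 0) ∧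
    ∀ p q : Set.Icc t T, (p : ℝ) ≤ q → F q - F p ∈ Set.Icc 0 (ubar * ((q : ℝ) - p))}

lemma AA_isClosed : IsClosed (AA t T ubar) := by
  have h1 : IsClosed {F : Set.Icc t T →ᵇ ℝ | ∀ p : Set.Icc t T, (p : ℝ) = t → F p = 0} := by
    have : {F : Set.Icc t T →ᵇ ℝ | ∀ p : Set.Icc t T, (p : ℝ) = t → F p = 0}
        = ⋂ p : Set.Icc t T, {F | (p : ℝ) = t → F p = 0} := by
      ext F; simp only [Set.mem_setOf_eq, Set.mem_iInter]
    rw [this]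
    refine isClosed_iInter (fun p => ?_)
    by_cases hp : (p : ℝ) = t
    · simp only [hp, forall_true_left]
      exact isClosed_eq (continuous_eval_const p : Continuous fun F : Set.Icc t T →ᵇ ℝ => F p) continuous_const
    · simp [hp]
  have h2 : IsClosed {F : Set.Icc t T →ᵇ ℝ |
      ∀ p q : Set.Icc t T, (p : ℝ) ≤ q → F q - F p ∈ Set.Icc 0 (ubar * ((q : ℝ) - p))} := by
    have : {F : Set.Icc t T →ᵇ ℝ |
        ∀ p q : Set.Icc t T, (p : ℝ) ≤ q → F q - F p ∈ Set.Icc 0 (ubar * ((q : ℝ) - p))}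
        = ⋂ p : Set.Icc t T, ⋂ q : Set.Icc t T,
            {F | (p : ℝ) ≤ q → F q - F p ∈ Set.Icc 0 (ubar * ((q : ℝ) - p))} := by
      ext F; simp only [Set.mem_setOf_eq, Set.mem_iInter]
    rw [this]
    refine isClosed_iInter (fun p => isClosed_iInter (fun q => ?_))
    by_cases hpq : (p : ℝ) ≤ q
    · simp only [hpq, forall_true_left]
      exact IsClosed.preimage
        ((continuous_eval_const q : Continuous fun F : Set.Icc t T →ᵇ ℝ => F q).sub
          (continuous_eval_const p : Continuous fun F : Set.Icc t T →ᵇ ℝ => F p)) isClosed_Icc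
    · simp [hpq]
  exact h1.inter h2

lemma AA_in_s (htT : t ≤ T) (hub : 0 ≤ ubar) {F : Set.Icc t T →ᵇ ℝ} (hF : F ∈ AA t T ubar)
    (p : Set.Icc t T) : F p ∈ Set.Icc 0 (ubar * (T - t)) := by
  have htmem : t ∈ Set.Icc t T := Set.left_mem_Icc.2 htT
  have h0 : F ⟨t, htmem⟩ = 0 := hF.1 _ rfl
  have h := hF.2 ⟨t, htmem⟩ p p.2.1
  rw [h0, sub_zero] at h
  refine ⟨h.1, h.2.trans ?_⟩
  exact mul_le_mul_of_nonneg_left (by linarith [p.2.2]) hub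

lemma AA_lip {F : Set.Icc t T →ᵇ ℝ} (hF : F ∈ AA t T ubar) (p q : Set.Icc t T) :
    |F q - F p| ≤ ubar * |(q : ℝ) - p| := by
  rcases le_total (p : ℝ) q with h | h
  · have h2 := hF.2 p q h
    rw [abs_of_nonneg h2.1, abs_of_nonneg (by linarith : (0:ℝ) ≤ (q:ℝ) - p)]
    exact h2.2
  · have h2 := hF.2 q p h
    rw [abs_sub_comm, abs_sub_comm (q : ℝ) p, abs_of_nonneg h2.1,
      abs_of_nonneg (by linarith : (0:ℝ) ≤ (p:ℝ) - q)]
    exact h2.2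

lemma AA_isCompact (htT : t ≤ T) (hub : 0 ≤ ubar) : IsCompact (AA t T ubar) := by
  refine BoundedContinuousFunction.arzela_ascoli₂ (Set.Icc 0 (ubar * (T - t))) isCompact_Icc
    (AA t T ubar) AA_isClosed (fun F p hF => AA_in_s htT hub hF p) ?_
  refine Metric.equicontinuous_of_continuity_modulus (fun d => ubar * d) ?_ _ ?_
  · have : Tendsto (fun d : ℝ => ubar * d) (nhds 0) (nhds (ubar * 0)) :=
      (continuous_const.mul continuous_id).tendsto 0
    simpa using this
  · rintro p q ⟨F, hF⟩
    rw [Real.dist_eq, Subtype.dist_eq, Real.dist_eq]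
    exact AA_lip hF q p

/-- cumulative control as an element of the function space -/
def bcf (htT : t ≤ T) {u : ℝ → ℝ} (hu : BddControl ubar u) : Set.Icc t T →ᵇ ℝ :=
  BoundedContinuousFunction.mkOfCompact ⟨fun p => cum t u p, (cum_cont hu).comp continuous_subtype_val⟩

lemma bcf_apply (htT : t ≤ T) {u : ℝ → ℝ} (hu : BddControl ubar u) (p : Set.Icc t T) :
    bcf htT hu p = cum t u p := rfl

lemma bcf_mem_AA (htT : t ≤ T) {u : ℝ → ℝ} (hu : BddControl ubar u) :
    bcf htT hu ∈ AA t T ubar := by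
  constructor
  · intro p hp
    rw [bcf_apply, hp, cum_zero]
  · intro p q hpq
    rw [bcf_apply, bcf_apply]
    refine ⟨by linarith [cum_mono (t := t) hu hpq], cum_lip (t := t) hu hpq⟩

end Cor54
namespace Cor54

variable {t T ubar ybar b x y : ℝ} {β : ℝ → ℝ}

def mkStj (f : ℝ → ℝ) (hm : Monotone f) (hc : Continuous f) : StieltjesFunction ℝ :=
  ⟨f, hm, fun _ => hc.continuousAt.continuousWithinAt⟩

@[simp] lemma mkStj_apply (f : ℝ → ℝ) (hm : Monotone f) (hc : Continuous f) :
    ⇑(mkStj f hm hc) = f := rfl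

lemma recover (htT : t ≤ T) (hub : 0 < ubar) {F : Set.Icc t T →ᵇ ℝ}
    (hF : F ∈ AA t T ubar) :
    ∃ u : ℝ → ℝ, BddControl ubar u ∧ ∀ p : Set.Icc t T, cum t u p = F p := by
  classical
  set g : ℝ → ℝ := fun s => F (Set.projIcc t T htT s) with hg
  have hFmono : ∀ p q : Set.Icc t T, (p : ℝ) ≤ q → F p ≤ F q := by
    intro p q h
    have := (hF.2 p q h).1
    linarith
  have hgmono : Monotone g := fun a c hac =>
    hFmono _ _ (Subtype.coe_le_coe.2 (Set.monotone_projIcc htT hac))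
  have hproj_sub : ∀ a c : ℝ, a ≤ c →
      ((Set.projIcc t T htT c : ℝ) - (Set.projIcc t T htT a : ℝ)) ≤ c - a := by
    intro a c hac
    have hlip := (LipschitzWith.projIcc htT).dist_le_mul a c
    rw [Subtype.dist_eq, Real.dist_eq, Real.dist_eq, NNReal.coe_one, one_mul] at hlip
    have hmono : (Set.projIcc t T htT a : ℝ) ≤ Set.projIcc t T htT c :=
      Subtype.coe_le_coe.2 (Set.monotone_projIcc htT hac)
    rw [abs_of_nonpos (by linarith), abs_of_nonpos (by linarith)] at hlip
    linarith
  have hglip : ∀ a c : ℝ, a ≤ c → g c - g a ≤ ubar * (c - a) := by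
    intro a c hac
    have h1 := (hF.2 _ _ (Subtype.coe_le_coe.2 (Set.monotone_projIcc htT hac))).2
    calc g c - g a ≤ ubar * ((Set.projIcc t T htT c : ℝ) - (Set.projIcc t T htT a : ℝ)) := h1
      _ ≤ ubar * (c - a) := mul_le_mul_of_nonneg_left (hproj_sub a c hac) hub.le
  have hgcont : Continuous g := F.continuous.comp continuous_projIcc
  have hmono2 : Monotone (fun s => ubar * s - g s) := by
    intro a c hac
    simp only
    have := hglip a c hac
    nlinarith
  have hmono3 : Monotone (fun s : ℝ => ubar * s) := by
    intro a c hac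
    simp only
    nlinarith
  set gs : StieltjesFunction ℝ := mkStj g hgmono hgcont with hgs
  set hsf : StieltjesFunction ℝ := mkStj (fun s => ubar * s - g s) hmono2
    ((continuous_const.mul continuous_id).sub hgcont) with hhsf
  set lin : StieltjesFunction ℝ := mkStj (fun s : ℝ => ubar * s) hmono3
    (continuous_const.mul continuous_id) with hlin0
  have hEQ : lin.measure = gs.measure + hsf.measure := by
    refine Measure.ext_of_Ioc _ _ (fun a c hac => ?_)
    rw [StieltjesFunction.measure_Ioc, Measure.add_apply, StieltjesFunction.measure_Ioc,
      StieltjesFunction.measure_Ioc]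
    simp only [hgs, hhsf, hlin0, mkStj_apply]
    rw [← ENNReal.ofReal_add (by linarith [hgmono hac.le] : (0:ℝ) ≤ g c - g a)
      (by linarith [hglip a c hac.le] : (0:ℝ) ≤ (ubar * c - g c) - (ubar * a - g a))]
    congr 1
    ring
  have hconv : (ubar.toNNReal • (volume : Measure ℝ)) = (ubar.toNNReal : ℝ≥0∞) • (volume : Measure ℝ) := by
    ext s hs
    rw [Measure.smul_apply, Measure.smul_apply, ENNReal.smul_def]
  have hlinv : lin.measure = (ubar.toNNReal : ℝ≥0∞) • (volume : Measure ℝ) := by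
    refine Measure.ext_of_Ioc _ _ (fun a c hac => ?_)
    rw [StieltjesFunction.measure_Ioc, Measure.smul_apply, Real.volume_Ioc, smul_eq_mul]
    simp only [hlin0, mkStj_apply]
    have hco : (ubar.toNNReal : ℝ≥0∞) = ENNReal.ofReal ubar := rfl
    rw [hco, ← ENNReal.ofReal_mul hub.le]
    congr 1
    ring
  have hTmem : T ∈ Set.Icc t T := Set.right_mem_Icc.2 htT
  have hgbot : Tendsto g atBot (𝓝 0) := by
    refine Tendsto.congr' ?_ (tendsto_const_nhds (α := ℝ))
    filter_upwards [eventually_le_atBot t] with s hs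
    rw [hg]
    simp only
    rw [Set.projIcc_of_le_left htT hs]
    exact (hF.1 _ rfl).symm
  have hgtop : Tendsto g atTop (𝓝 (F ⟨T, hTmem⟩)) := by
    refine Tendsto.congr' ?_ (tendsto_const_nhds (α := ℝ))
    filter_upwards [eventually_ge_atTop T] with s hs
    rw [hg]
    simp only
    rw [Set.projIcc_of_right_le htT hs]
  haveI hfin : IsFiniteMeasure gs.measure := gs.isFiniteMeasure hgbot hgtop
  have hle : gs.measure ≤ (ubar.toNNReal : ℝ≥0∞) • (volume : Measure ℝ) := by
    calc gs.measure ≤ gs.measure + hsf.measure := Measure.le_add_right le_rfl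
      _ = lin.measure := hEQ.symm
      _ = _ := hlinv
  have hac : gs.measure ≪ (volume : Measure ℝ) := Measure.absolutelyContinuous_of_le_smul hle
  have h1 := Measure.rnDeriv_add' gs.measure hsf.measure (volume : Measure ℝ)
  have h2 := Measure.rnDeriv_smul_left' (volume : Measure ℝ) (volume : Measure ℝ) ubar.toNNReal
  have h3 := Measure.rnDeriv_self (volume : Measure ℝ)
  have hbd : ∀ᵐ s ∂(volume : Measure ℝ),
      gs.measure.rnDeriv volume s ≤ ENNReal.ofReal ubar := by
    have h4 : (gs.measure + hsf.measure).rnDeriv volume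
        =ᵐ[(volume : Measure ℝ)] fun _ => (ubar.toNNReal : ℝ≥0∞) := by
      rw [← hEQ, hlinv, ← hconv]
      filter_upwards [h2, h3] with s hs2 hs3
      rw [hs2, Pi.smul_apply, hs3, ENNReal.smul_def, smul_eq_mul, mul_one]
    filter_upwards [h1, h4] with s hs1 hs4
    calc gs.measure.rnDeriv volume s
        ≤ (gs.measure.rnDeriv volume + hsf.measure.rnDeriv volume) s := le_self_add
      _ = (gs.measure + hsf.measure).rnDeriv volume s := (hs1).symm
      _ = (ubar.toNNReal : ℝ≥0∞) := hs4
      _ = ENNReal.ofReal ubar := rfl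
  have hu0m : Measurable (fun s => (gs.measure.rnDeriv volume s).toReal) :=
    (Measure.measurable_rnDeriv _ _).ennreal_toReal
  refine ⟨trunc ubar (fun s => (gs.measure.rnDeriv volume s).toReal),
    trunc_bdd hub.le hu0m, fun p => ?_⟩
  have haeq : trunc ubar (fun s => (gs.measure.rnDeriv volume s).toReal)
      =ᵐ[(volume : Measure ℝ)] (fun s => (gs.measure.rnDeriv volume s).toReal) := by
    filter_upwards [hbd] with s hs
    refine trunc_eq ⟨ENNReal.toReal_nonneg, ?_⟩
    have h5 := ENNReal.toReal_mono (by simp) hs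
    rwa [ENNReal.toReal_ofReal hub.le] at h5
  have hgt : g t = 0 := by
    rw [hg]
    simp only
    rw [Set.projIcc_left]
    exact hF.1 _ rfl
  have hgp : g p = F p := by
    rw [hg]
    simp only
    rw [Set.projIcc_of_mem htT p.2]
  calc cum t (trunc ubar (fun s => (gs.measure.rnDeriv volume s).toReal)) p
      = ∫ s in Set.Ioc t (p : ℝ), trunc ubar (fun s => (gs.measure.rnDeriv volume s).toReal) s := by
        rw [cum, intervalIntegral.integral_of_le p.2.1]
    _ = ∫ s in Set.Ioc t (p : ℝ), (gs.measure.rnDeriv volume s).toReal :=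
        setIntegral_congr_ae measurableSet_Ioc (haeq.mono fun s h _ => h)
    _ = (gs.measure (Set.Ioc t (p : ℝ))).toReal := Measure.setIntegral_toReal_rnDeriv hac _
    _ = (ENNReal.ofReal (g p - g t)).toReal := by
        rw [StieltjesFunction.measure_Ioc]
        simp only [hgs, mkStj_apply]
    _ = F p := by
        rw [ENNReal.toReal_ofReal (by rw [hgt]; linarith [hgmono p.2.1] : (0:ℝ) ≤ g p - g t)]
        rw [hgt, hgp]
        ring

end Cor54
namespace Cor54

variable {t T ubar ybar b x y : ℝ} {β : ℝ → ℝ}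

lemma exp_bnd (htT : t ≤ T) {r : ℝ} (hr : r ∈ Set.Icc t T) :
    Real.exp (b * (r - t)) ≤ Real.exp (|b| * (T - t)) := by
  refine Real.exp_le_exp.2 ?_
  calc b * (r - t) ≤ |b| * (r - t) :=
        mul_le_mul_of_nonneg_right (le_abs_self b) (by linarith [hr.1])
    _ ≤ |b| * (T - t) := mul_le_mul_of_nonneg_left (by linarith [hr.2]) (abs_nonneg b)

lemma P'_cont : Continuous (fun r => x * b * Real.exp (b * (r - t))) := by fun_prop

lemma P'_bnd (htT : t ≤ T) {r : ℝ} (hr : r ∈ Set.Icc t T) :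
    |x * b * Real.exp (b * (r - t))| ≤ |x * b| * Real.exp (|b| * (T - t)) := by
  rw [abs_mul, abs_of_nonneg (Real.exp_pos _).le]
  exact mul_le_mul_of_nonneg_left (exp_bnd htT hr) (abs_nonneg _)

lemma price_hasDeriv (r : ℝ) :
    HasDerivAt (price t x b) (x * b * Real.exp (b * (r - t))) r := by
  have h0 : HasDerivAt (fun s : ℝ => b * (s - t)) b r := by
    simpa using ((hasDerivAt_id r).sub_const t).const_mul b
  have h1 := h0.exp.const_mul x
  exact h1.congr_deriv (by ring)

lemma price_integral_repr (s T' : ℝ) :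
    price t x b T' - price t x b s = ∫ r in s..T', x * b * Real.exp (b * (r - t)) :=
  (intervalIntegral.integral_eq_sub_of_hasDerivAt (fun r _ => price_hasDeriv r)
    (P'_cont.intervalIntegrable s T')).symm

/-- Integration by parts for the price functional. -/
lemma parts (htT : t ≤ T) {u : ℝ → ℝ} (hu : BddControl ubar u) (hub : 0 ≤ ubar) :
    ∫ s in t..T, price t x b s * u s
      = price t x b T * cum t u T
        - ∫ r in t..T, (x * b * Real.exp (b * (r - t))) * cum t u r := by
  classical
  set P' : ℝ → ℝ := fun r => x * b * Real.exp (b * (r - t)) with hP'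
  set C' : ℝ := |x * b| * Real.exp (|b| * (T - t)) with hC'
  have hC'0 : 0 ≤ C' := by positivity
  -- continuity of s ↦ ∫ r in s..T, P' r
  have hcont2 : Continuous (fun s => ∫ r in s..T, P' r) := by
    have h := intervalIntegral.continuous_primitive (μ := volume) (fun a c => (P'_cont (x := x) (b := b) (t := t)).intervalIntegrable a c) T
    have : (fun s => ∫ r in s..T, P' r) = fun s => -(∫ r in T..s, P' r) := by
      funext s
      rw [← intervalIntegral.integral_symm]
    rw [this]
    exact h.neg
  -- pointwise decomposition
  have hpt : ∀ s, price t x b s * u s = price t x b T * u s - (∫ r in s..T, P' r) * u s := by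
    intro s
    have h := price_integral_repr (t := t) (x := x) (b := b) s T
    simp only [hP']
    rw [← h]
    ring
  have II1 : IntervalIntegrable (fun s => price t x b T * u s) volume t T :=
    (hu.II t T).const_mul _
  have II2 : IntervalIntegrable (fun s => (∫ r in s..T, P' r) * u s) volume t T := by
    refine II_of_bdd ((hcont2.measurable).mul hu.1) (C := C' * (T - t) * ubar) ?_
    refine ae_of_all _ (fun s hs => ?_)
    rw [Set.uIoc_of_le htT] at hs
    rw [abs_mul]
    have hb1 : |∫ r in s..T, P' r| ≤ C' * (T - s) := by
      have := intervalIntegral.norm_integral_le_of_norm_le_const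
        (C := C') (f := P') (a := s) (b := T) ?_
      · rwa [Real.norm_eq_abs, abs_of_nonneg (by linarith [hs.2] : (0:ℝ) ≤ T - s)] at this
      · intro r hr
        rw [Set.uIoc_of_le hs.2] at hr
        exact P'_bnd htT ⟨(hs.1.trans hr.1).le, hr.2⟩
    have hb2 : |u s| ≤ ubar := by
      rw [abs_of_nonneg (hu.2 s).1]
      exact (hu.2 s).2
    have h3 : C' * (T - s) ≤ C' * (T - t) := mul_le_mul_of_nonneg_left (by linarith [hs.1]) hC'0
    calc |∫ r in s..T, P' r| * |u s| ≤ (C' * (T - s)) * ubar :=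
          mul_le_mul hb1 hb2 (abs_nonneg _) (mul_nonneg hC'0 (by linarith [hs.2]))
      _ ≤ C' * (T - t) * ubar := mul_le_mul_of_nonneg_right h3 hub
  have step1 : ∫ s in t..T, price t x b s * u s
      = price t x b T * cum t u T - ∫ s in t..T, (∫ r in s..T, P' r) * u s := by
    rw [show (fun s => price t x b s * u s)
        = fun s => price t x b T * u s - (∫ r in s..T, P' r) * u s from funext hpt]
    rw [intervalIntegral.integral_sub II1 II2, intervalIntegral.integral_const_mul]
    rfl
  rw [step1]
  congr 1
  -- now the Fubini part
  have hmes : MeasurableSet {q : ℝ × ℝ | q.1 < q.2} := measurableSet_lt measurable_fst measurable_snd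
  haveI hfin1 : IsFiniteMeasure ((volume : Measure ℝ).restrict (Set.Ioc t T)) := by
    constructor
    rw [Measure.restrict_apply_univ]
    exact measure_Ioc_lt_top
  set μ := (volume : Measure ℝ).restrict (Set.Ioc t T) with hμ
  have hswap : ∫ s, (∫ r, (Set.Ioi s).indicator P' r * u s ∂μ) ∂μ
      = ∫ r, (∫ s, (Set.Ioi s).indicator P' r * u s ∂μ) ∂μ := by
    refine MeasureTheory.integral_integral_swap ?_
    have heq : (Function.uncurry fun s r => (Set.Ioi s).indicator P' r * u s)
        = fun p : ℝ × ℝ => ({q : ℝ × ℝ | q.1 < q.2}.indicator (fun q => P' q.2) p) * u p.1 := by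
      funext p
      by_cases h : p.1 < p.2
      · simp [Function.uncurry, Set.indicator_apply, Set.mem_Ioi, h]
      · simp [Function.uncurry, Set.indicator_apply, Set.mem_Ioi, h]
    rw [heq]
    constructor
    · refine Measurable.aestronglyMeasurable ?_
      exact ((P'_cont.measurable.comp measurable_snd).indicator hmes).mul (hu.1.comp measurable_fst)
    · refine MeasureTheory.HasFiniteIntegral.of_bounded (C := C' * ubar) ?_
      rw [hμ, Measure.prod_restrict]
      refine (ae_restrict_iff' (measurableSet_Ioc.prod measurableSet_Ioc)).2 (ae_of_all _ ?_)
      rintro p ⟨hp1, hp2⟩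
      rw [Real.norm_eq_abs, abs_mul]
      have hb1 : |{q : ℝ × ℝ | q.1 < q.2}.indicator (fun q => P' q.2) p| ≤ C' := by
        by_cases h : p ∈ {q : ℝ × ℝ | q.1 < q.2}
        · rw [Set.indicator_of_mem h]
          exact P'_bnd htT ⟨hp2.1.le, hp2.2⟩
        · rw [Set.indicator_of_notMem h]
          simpa using hC'0
      have hb2 : |u p.1| ≤ ubar := by
        rw [abs_of_nonneg (hu.2 p.1).1]
        exact (hu.2 p.1).2
      exact mul_le_mul hb1 hb2 (abs_nonneg _) hC'0
  -- identify LHS of hswap with the s-integral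
  have hL : ∫ s in t..T, (∫ r in s..T, P' r) * u s
      = ∫ s, (∫ r, (Set.Ioi s).indicator P' r * u s ∂μ) ∂μ := by
    rw [intervalIntegral.integral_of_le htT, hμ]
    refine setIntegral_congr_fun measurableSet_Ioc (fun s hs => ?_)
    have hinner : ∫ r in s..T, P' r = ∫ r, (Set.Ioi s).indicator P' r ∂μ := by
      have hset : Set.Ioc t T ∩ Set.Ioi s = Set.Ioc s T := by
        ext r
        constructor
        · rintro ⟨⟨h1, h2⟩, h3⟩
          exact ⟨h3, h2⟩
        · rintro ⟨h1, h2⟩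
          exact ⟨⟨hs.1.trans h1, h2⟩, h1⟩
      rw [intervalIntegral.integral_of_le hs.2, hμ, setIntegral_indicator measurableSet_Ioi, hset]
    rw [hinner, ← MeasureTheory.integral_mul_const]
  have hR : ∫ r, (∫ s, (Set.Ioi s).indicator P' r * u s ∂μ) ∂μ
      = ∫ r in t..T, P' r * cum t u r := by
    rw [intervalIntegral.integral_of_le htT, ← hμ]
    refine setIntegral_congr_fun measurableSet_Ioc (fun r hr => ?_)
    have h1 : (fun s => (Set.Ioi s).indicator P' r * u s)
        = fun s => (Set.Iio r).indicator (fun s' => P' r * u s') s := by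
      funext s
      by_cases h : s < r
      · simp [Set.indicator_apply, Set.mem_Ioi, Set.mem_Iio, h]
      · simp [Set.indicator_apply, Set.mem_Ioi, Set.mem_Iio, h]
    rw [h1, hμ, setIntegral_indicator measurableSet_Iio]
    have h2 : Set.Ioc t T ∩ Set.Iio r = Set.Ioo t r := by
      ext s
      constructor
      · rintro ⟨⟨hs1, hs2⟩, hs3⟩
        exact ⟨hs1, hs3⟩
      · rintro ⟨hs1, hs2⟩
        exact ⟨⟨hs1, (le_of_lt hs2).trans hr.2⟩, hs2⟩
    rw [h2, ← MeasureTheory.integral_Ioc_eq_integral_Ioo, MeasureTheory.integral_const_mul]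
    congr 1
    rw [cum, intervalIntegral.integral_of_le hr.1.le]
  rw [hL, hswap, hR]

end Cor54
namespace Cor54

variable {t T ubar ybar b x y : ℝ} {β : ℝ → ℝ}

lemma beta_II (hβm : Measurable β) (hβb : ∃ M, ∀ s, |β s| ≤ M) (a c : ℝ) :
    IntervalIntegrable β volume a c := by
  obtain ⟨M, hM⟩ := hβb
  exact II_of_bdd_forall hβm hM a c

lemma B_cont (hβm : Measurable β) (hβb : ∃ M, ∀ s, |β s| ≤ M) :
    Continuous (fun s => ∫ r in t..s, β r) :=
  intervalIntegral.continuous_primitive (beta_II hβm hβb) t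

lemma control_II (htT : t ≤ T) {u : ℝ → ℝ} (hu : IsControl t T ubar u)
    {s : ℝ} (hs : s ∈ Set.Icc t T) : IntervalIntegrable u volume t s := by
  refine II_of_bdd hu.1 (C := max ubar 0) ?_
  filter_upwards [hu.2] with r hr hmem
  rw [Set.uIoc_of_le hs.1] at hmem
  have := hr ⟨hmem.1.le, hmem.2.trans hs.2⟩
  rw [abs_of_nonneg this.1]
  exact le_max_of_le_left this.2

lemma control_trunc_ae (htT : t ≤ T) {u : ℝ → ℝ} (hu : IsControl t T ubar u) :
    ∀ᵐ s ∂(volume : Measure ℝ), s ∈ Set.Icc t T → trunc ubar u s = u s := by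
  filter_upwards [hu.2] with s hs hmem
  exact trunc_eq (hs hmem)

lemma cum_trunc (htT : t ≤ T) {u : ℝ → ℝ} (hu : IsControl t T ubar u)
    {s : ℝ} (hs : s ∈ Set.Icc t T) :
    cum t (trunc ubar u) s = ∫ r in t..s, u r := by
  rw [cum]
  refine intervalIntegral.integral_congr_ae ?_
  filter_upwards [control_trunc_ae htT hu] with r hr hmem
  rw [Set.uIoc_of_le hs.1] at hmem
  exact hr ⟨hmem.1.le, hmem.2.trans hs.2⟩

lemma Jint_trunc (htT : t ≤ T) {u : ℝ → ℝ} (hu : IsControl t T ubar u) :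
    Jint t T ubar x b (trunc ubar u) = Jint t T ubar x b u := by
  rw [Jint, Jint]
  refine intervalIntegral.integral_congr_ae ?_
  filter_upwards [control_trunc_ae htT hu] with r hr hmem
  rw [Set.uIoc_of_le htT] at hmem
  rw [hr ⟨hmem.1.le, hmem.2⟩]

lemma traj_repr (htT : t ≤ T) (hβm : Measurable β) (hβb : ∃ M, ∀ s, |β s| ≤ M)
    {u : ℝ → ℝ} (hu : IsControl t T ubar u) {s : ℝ} (hs : s ∈ Set.Icc t T) :
    traj t β y u s = y + (∫ r in t..s, β r) - cum t (trunc ubar u) s := by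
  rw [traj, cum_trunc htT hu hs,
    intervalIntegral.integral_sub (beta_II hβm hβb t s) (control_II htT hu hs)]
  ring

/-- the functional `Φ` on the function space -/
def Phi (htT : t ≤ T) (x b : ℝ) (F : Set.Icc t T →ᵇ ℝ) : ℝ :=
  price t x b T * F (Set.projIcc t T htT T)
    - ∫ r in t..T, (x * b * Real.exp (b * (r - t))) * F (Set.projIcc t T htT r)

/-- the constraint functional `D` on the function space -/
def Dfun (htT : t ≤ T) (ybar y : ℝ) (β : ℝ → ℝ) (F : Set.Icc t T →ᵇ ℝ) : ℝ :=
  ∫ s in t..T, Metric.infDist (y + (∫ r in t..s, β r) - F (Set.projIcc t T htT s))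
    (Set.Icc 0 ybar)

lemma Phi_bcf (htT : t ≤ T) {u : ℝ → ℝ} (hu : BddControl ubar u) (hub : 0 ≤ ubar) :
    Phi htT x b (bcf htT hu) = ∫ s in t..T, price t x b s * u s := by
  rw [Phi, parts htT hu hub]
  have h1 : bcf htT hu (Set.projIcc t T htT T) = cum t u T := by
    rw [Set.projIcc_of_mem htT (Set.right_mem_Icc.2 htT), bcf_apply]
  rw [h1]
  congr 1
  refine intervalIntegral.integral_congr (fun r hr => ?_)
  rw [Set.uIcc_of_le htT] at hr
  rw [Set.projIcc_of_mem htT hr, bcf_apply]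

lemma Phi_lip (htT : t ≤ T) (F G : Set.Icc t T →ᵇ ℝ) :
    |Phi htT x b F - Phi htT x b G|
      ≤ (|price t x b T| + |x * b| * Real.exp (|b| * (T - t)) * (T - t)) * dist F G := by
  have hFc : Continuous fun r => F (Set.projIcc t T htT r) :=
    F.continuous.comp continuous_projIcc
  have hGc : Continuous fun r => G (Set.projIcc t T htT r) :=
    G.continuous.comp continuous_projIcc
  have hsub : Phi htT x b F - Phi htT x b G
      = price t x b T * (F (Set.projIcc t T htT T) - G (Set.projIcc t T htT T))
        - ∫ r in t..T, (x * b * Real.exp (b * (r - t)))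
            * (F (Set.projIcc t T htT r) - G (Set.projIcc t T htT r)) := by
    rw [Phi, Phi]
    rw [show (fun r => (x * b * Real.exp (b * (r - t)))
        * (F (Set.projIcc t T htT r) - G (Set.projIcc t T htT r)))
      = fun r => (x * b * Real.exp (b * (r - t))) * F (Set.projIcc t T htT r)
          - (x * b * Real.exp (b * (r - t))) * G (Set.projIcc t T htT r) from
        funext (fun r => by ring)]
    rw [intervalIntegral.integral_sub
      (f := fun r => x * b * Real.exp (b * (r - t)) * F (Set.projIcc t T htT r))
      (g := fun r => x * b * Real.exp (b * (r - t)) * G (Set.projIcc t T htT r))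
      ((P'_cont.mul hFc).intervalIntegrable t T)
      ((P'_cont.mul hGc).intervalIntegrable t T)]
    ring
  rw [hsub]
  have hb1 : |price t x b T * (F (Set.projIcc t T htT T) - G (Set.projIcc t T htT T))|
      ≤ |price t x b T| * dist F G := by
    rw [abs_mul]
    refine mul_le_mul_of_nonneg_left ?_ (abs_nonneg _)
    rw [← Real.dist_eq]
    exact BoundedContinuousFunction.dist_coe_le_dist _
  have hb2 : |∫ r in t..T, (x * b * Real.exp (b * (r - t)))
      * (F (Set.projIcc t T htT r) - G (Set.projIcc t T htT r))|
      ≤ |x * b| * Real.exp (|b| * (T - t)) * dist F G * (T - t) := by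
    have := intervalIntegral.norm_integral_le_of_norm_le_const
      (C := |x * b| * Real.exp (|b| * (T - t)) * dist F G)
      (f := fun r => (x * b * Real.exp (b * (r - t)))
        * (F (Set.projIcc t T htT r) - G (Set.projIcc t T htT r)))
      (a := t) (b := T) ?_
    · rwa [Real.norm_eq_abs, abs_of_nonneg (by linarith : (0:ℝ) ≤ T - t)] at this
    · intro r hr
      rw [Set.uIoc_of_le htT] at hr
      rw [Real.norm_eq_abs, abs_mul]
      refine mul_le_mul (P'_bnd htT ⟨hr.1.le, hr.2⟩) ?_ (abs_nonneg _) (by positivity)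
      rw [← Real.dist_eq]
      exact BoundedContinuousFunction.dist_coe_le_dist _
  calc |price t x b T * (F (Set.projIcc t T htT T) - G (Set.projIcc t T htT T))
      - ∫ r in t..T, (x * b * Real.exp (b * (r - t)))
          * (F (Set.projIcc t T htT r) - G (Set.projIcc t T htT r))|
      ≤ |price t x b T * (F (Set.projIcc t T htT T) - G (Set.projIcc t T htT T))|
        + |∫ r in t..T, (x * b * Real.exp (b * (r - t)))
            * (F (Set.projIcc t T htT r) - G (Set.projIcc t T htT r))| := abs_sub _ _
    _ ≤ |price t x b T| * dist F G
        + |x * b| * Real.exp (|b| * (T - t)) * dist F G * (T - t) := add_le_add hb1 hb2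
    _ = (|price t x b T| + |x * b| * Real.exp (|b| * (T - t)) * (T - t)) * dist F G := by ring

lemma infDist_abs_sub (p q : ℝ) (K : Set ℝ) :
    |Metric.infDist p K - Metric.infDist q K| ≤ |p - q| := by
  rw [abs_sub_le_iff]
  constructor
  · have := Metric.infDist_le_infDist_add_dist (x := p) (y := q) (s := K)
    rw [Real.dist_eq] at this
    linarith [this, abs_sub_comm p q ▸ le_abs_self (p - q)]
  · have := Metric.infDist_le_infDist_add_dist (x := q) (y := p) (s := K)
    rw [Real.dist_eq, abs_sub_comm q p] at this
    linarith

lemma Dfun_lip (htT : t ≤ T) (hβm : Measurable β) (hβb : ∃ M, ∀ s, |β s| ≤ M)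
    (F G : Set.Icc t T →ᵇ ℝ) :
    |Dfun htT ybar y β F - Dfun htT ybar y β G| ≤ dist F G * (T - t) := by
  have hFc : Continuous (fun s => Metric.infDist
      (y + (∫ r in t..s, β r) - F (Set.projIcc t T htT s)) (Set.Icc 0 ybar)) := by
    refine Metric.continuous_infDist_pt _ |>.comp ?_
    exact (continuous_const.add (B_cont hβm hβb)).sub (F.continuous.comp continuous_projIcc)
  have hGc : Continuous (fun s => Metric.infDist
      (y + (∫ r in t..s, β r) - G (Set.projIcc t T htT s)) (Set.Icc 0 ybar)) := by
    refine Metric.continuous_infDist_pt _ |>.comp ?_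
    exact (continuous_const.add (B_cont hβm hβb)).sub (G.continuous.comp continuous_projIcc)
  rw [Dfun, Dfun, ← intervalIntegral.integral_sub (hFc.intervalIntegrable t T)
    (hGc.intervalIntegrable t T)]
  have := intervalIntegral.norm_integral_le_of_norm_le_const (C := dist F G)
    (f := fun s => Metric.infDist (y + (∫ r in t..s, β r) - F (Set.projIcc t T htT s))
        (Set.Icc 0 ybar)
      - Metric.infDist (y + (∫ r in t..s, β r) - G (Set.projIcc t T htT s)) (Set.Icc 0 ybar))
    (a := t) (b := T) ?_
  · rw [Real.norm_eq_abs, abs_of_nonneg (by linarith : (0:ℝ) ≤ T - t)] at this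
    linarith [this]
  · intro s hs
    rw [Real.norm_eq_abs]
    refine (infDist_abs_sub _ _ _).trans ?_
    have heq : (y + (∫ r in t..s, β r) - F (Set.projIcc t T htT s))
        - (y + (∫ r in t..s, β r) - G (Set.projIcc t T htT s))
        = G (Set.projIcc t T htT s) - F (Set.projIcc t T htT s) := by ring
    rw [heq, ← Real.dist_eq, dist_comm]
    exact BoundedContinuousFunction.dist_coe_le_dist _

lemma Dfun_nonneg (htT : t ≤ T) (F : Set.Icc t T →ᵇ ℝ) : 0 ≤ Dfun htT ybar y β F :=
  intervalIntegral.integral_nonneg htT (fun s _ => Metric.infDist_nonneg)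

lemma Dfun_traj (htT : t ≤ T) (hβm : Measurable β) (hβb : ∃ M, ∀ s, |β s| ≤ M)
    {u : ℝ → ℝ} (hu : IsControl t T ubar u) (hub : 0 ≤ ubar) :
    Dfun htT ybar y β (bcf htT (trunc_bdd hub hu.1))
      = ∫ s in t..T, Metric.infDist (traj t β y u s) (Set.Icc 0 ybar) := by
  rw [Dfun]
  refine intervalIntegral.integral_congr (fun s hs => ?_)
  rw [Set.uIcc_of_le htT] at hs
  rw [traj_repr htT hβm hβb hu hs, Set.projIcc_of_mem htT hs, bcf_apply]

end Cor54
namespace Cor54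

variable {t T ubar ybar b x y : ℝ} {β : ℝ → ℝ}

lemma feas (htT : t ≤ T) (hyb : 0 < ybar) (hβm : Measurable β)
    (hβb : ∃ M, ∀ s, |β s| ≤ M) {F : Set.Icc t T →ᵇ ℝ} (hFA : F ∈ AA t T ubar)
    (hy : y ∈ Set.Icc 0 ybar) (hD : Dfun htT ybar y β F = 0) :
    ∀ s ∈ Set.Icc t T,
      y + (∫ r in t..s, β r) - F (Set.projIcc t T htT s) ∈ Set.Icc 0 ybar := by
  set d : ℝ → ℝ := fun s => Metric.infDist
    (y + (∫ r in t..s, β r) - F (Set.projIcc t T htT s)) (Set.Icc 0 ybar) with hd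
  have hdc : Continuous d := by
    refine Metric.continuous_infDist_pt _ |>.comp ?_
    exact (continuous_const.add (B_cont hβm hβb)).sub (F.continuous.comp continuous_projIcc)
  have hKne : (Set.Icc (0:ℝ) ybar).Nonempty := Set.nonempty_Icc.2 hyb.le
  have hKcl : IsClosed (Set.Icc (0:ℝ) ybar) := isClosed_Icc
  intro s hs
  rw [hKcl.mem_iff_infDist_zero hKne]
  by_contra hne
  have hd0 : 0 < d s := lt_of_le_of_ne Metric.infDist_nonneg (Ne.symm hne)
  -- first: the case s = t is impossible since d t = 0
  have hdt : d t = 0 := by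
    rw [hd]
    simp only
    rw [intervalIntegral.integral_same, Set.projIcc_left, hFA.1 _ rfl]
    rw [add_zero, sub_zero]
    exact Metric.infDist_zero_of_mem hy
  have hts : t < s := by
    rcases eq_or_lt_of_le hs.1 with h | h
    · exfalso
      rw [← h] at hd0
      linarith
    · exact h
  have htT' : t < T := lt_of_lt_of_le hts hs.2
  -- continuity neighborhood
  obtain ⟨δ, hδ0, hδ⟩ := Metric.continuousAt_iff.1 hdc.continuousAt (d s / 2) (by linarith)
  set a' : ℝ := max t (s - δ / 2) with ha'
  set b' : ℝ := min T (s + δ / 2) with hb'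
  have hta' : t ≤ a' := le_max_left _ _
  have hb'T : b' ≤ T := min_le_left _ _
  have ha'b' : a' < b' := by
    rcases lt_or_ge s T with h | h
    · have h1 : a' ≤ s := max_le hs.1 (by linarith)
      have h2 : s < b' := lt_min h (by linarith)
      linarith
    · have hsT : s = T := le_antisymm hs.2 h
      have h1 : a' < T := max_lt htT' (by rw [hsT]; linarith)
      have h2 : b' = T := by
        rw [hb', hsT]
        exact min_eq_left (by linarith)
      rw [h2]
      exact h1
  have hmid : ∀ r ∈ Set.Icc a' b', d s / 2 ≤ d r := by
    intro r hr
    have h1 : |r - s| < δ := by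
      have h2 : s - δ / 2 ≤ a' := le_max_right _ _
      have h3 : b' ≤ s + δ / 2 := min_le_right _ _
      rw [abs_lt]
      constructor <;> [linarith [hr.1]; linarith [hr.2]]
    have := hδ (by rwa [Real.dist_eq] : dist r s < δ)
    rw [Real.dist_eq, abs_lt] at this
    linarith [this.1, this.2]
  have hdi : ∀ a c : ℝ, IntervalIntegrable d volume a c :=
    fun a c => hdc.intervalIntegrable a c
  have hI1 : (0:ℝ) ≤ ∫ r in t..a', d r :=
    intervalIntegral.integral_nonneg hta' (fun r _ => Metric.infDist_nonneg)
  have hI3 : (0:ℝ) ≤ ∫ r in b'..T, d r :=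
    intervalIntegral.integral_nonneg hb'T (fun r _ => Metric.infDist_nonneg)
  have hI2 : d s / 2 * (b' - a') ≤ ∫ r in a'..b', d r := by
    have := intervalIntegral.integral_mono_on (μ := volume) (f := fun _ => d s / 2)
      (g := d) ha'b'.le (_root_.intervalIntegrable_const (μ := volume) (c := d s / 2))
      (hdi a' b') hmid
    rw [intervalIntegral.integral_const, smul_eq_mul] at this
    linarith
  have hsplit : (∫ r in t..T, d r)
      = (∫ r in t..a', d r) + (∫ r in a'..b', d r) + (∫ r in b'..T, d r) := by
    have e1 := intervalIntegral.integral_add_adjacent_intervals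
      (hdi t a') (hdi a' b')
    have e2 := intervalIntegral.integral_add_adjacent_intervals
      ((hdi t a').trans (hdi a' b'))
      (hdi b' T)
    linarith [e1, e2]
  have hDd : (∫ r in t..T, d r) = 0 := hD
  nlinarith [hI2, hI1, hI3, mul_pos (by linarith : (0:ℝ) < d s / 2) (by linarith : (0:ℝ) < b' - a')]

end Cor54
namespace Cor54

variable {t T ubar ybar b x y : ℝ} {β : ℝ → ℝ}

lemma main_exists (htT : t ≤ T) (hub : 0 < ubar) (hyb : 0 < ybar)
    (hβm : Measurable β) (hβb : ∃ M, ∀ s, |β s| ≤ M) (hx : 0 ≤ x)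
    (hadm : ∃ u, Admissible t T ubar ybar β y u) :
    ∃ u, Admissible t T ubar ybar β y u ∧
      sSup {z : ℝ | z ≤ 0 ∧ W t T ubar ybar x b β y z = 0} ≤ Jint t T ubar x b u := by
  classical
  obtain ⟨u₀, hu₀⟩ := hadm
  set S := {z : ℝ | z ≤ 0 ∧ W t T ubar ybar x b β y z = 0} with hSdef
  have hJ0 : Jint t T ubar x b u₀ ∈ S :=
    ⟨Jint_nonpos htT hub.le hx hu₀.1, W_zero_of_admissible htT hub hu₀ le_rfl⟩
  have hSne : S.Nonempty := ⟨_, hJ0⟩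
  have hSbdd : BddAbove S := ⟨0, fun z hz => hz.1⟩
  set zbar := sSup S with hzbar
  have hy0 : y ∈ Set.Icc 0 ybar := by
    have h := hu₀.2 t ⟨le_rfl, htT⟩
    rwa [traj, intervalIntegral.integral_same, add_zero] at h
  -- approximations
  have happrox : ∀ n : ℕ, ∃ u, IsControl t T ubar u
      ∧ zbar - 2 / ((n : ℝ) + 1) ≤ Jint t T ubar x b u
      ∧ (∫ s in t..T, Metric.infDist (traj t β y u s) (Set.Icc 0 ybar))
          < 1 / ((n : ℝ) + 1) := by
    intro n
    have hpos : (0:ℝ) < 1 / ((n : ℝ) + 1) := by positivity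
    obtain ⟨z, hzS, hzgt⟩ := exists_lt_of_lt_csSup hSne
      (show zbar - 1 / ((n : ℝ) + 1) < zbar by linarith)
    have hW : W t T ubar ybar x b β y z = 0 := hzS.2
    have hCne : {c : ℝ | ∃ u, IsControl t T ubar u
        ∧ c = levelCost t T ubar ybar x b β y z u}.Nonempty :=
      ⟨levelCost t T ubar ybar x b β y z u₀, u₀, hu₀.1, rfl⟩
    have hlt : sInf {c : ℝ | ∃ u, IsControl t T ubar u
        ∧ c = levelCost t T ubar ybar x b β y z u} < 1 / ((n : ℝ) + 1) := by
      have h : W t T ubar ybar x b β y z < 1 / ((n : ℝ) + 1) := by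
        rw [hW]; exact hpos
      exact h
    obtain ⟨c, hcmem, hclt⟩ := exists_lt_of_csInf_lt hCne hlt
    obtain ⟨u, hu, rfl⟩ := hcmem
    have hrepr : levelCost t T ubar ybar x b β y z u
        = max (z - Jint t T ubar x b u) 0
          + ∫ s in t..T, Metric.infDist (traj t β y u s) (Set.Icc 0 ybar) := rfl
    have hdn : 0 ≤ ∫ s in t..T, Metric.infDist (traj t β y u s) (Set.Icc 0 ybar) :=
      intervalIntegral.integral_nonneg htT (fun s _ => Metric.infDist_nonneg)
    have hmax0 : (0:ℝ) ≤ max (z - Jint t T ubar x b u) 0 := le_max_right _ _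
    have h1 : z - Jint t T ubar x b u ≤ max (z - Jint t T ubar x b u) 0 := le_max_left _ _
    rw [hrepr] at hclt
    have h2n : 2 / ((n : ℝ) + 1) = 2 * (1 / ((n : ℝ) + 1)) := by ring
    refine ⟨u, hu, by rw [h2n]; linarith, by linarith⟩
  choose uap hap using happrox
  have hvB : ∀ n, BddControl ubar (trunc ubar (uap n)) := fun n => trunc_bdd hub.le (hap n).1.1
  set Fn : ℕ → (Set.Icc t T →ᵇ ℝ) := fun n => bcf htT (hvB n) with hFndef
  obtain ⟨F, hFA, φ, hφ, hφtend⟩ := (AA_isCompact (ubar := ubar) htT hub.le).tendsto_subseq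
    (x := Fn) (fun n => bcf_mem_AA htT (hvB n))
  have hdist0 : Tendsto (fun n => dist (Fn (φ n)) F) atTop (𝓝 0) :=
    tendsto_iff_dist_tendsto_zero.1 hφtend
  have h2 : Tendsto (fun n => (1:ℝ) / ((φ n : ℝ) + 1)) atTop (𝓝 0) :=
    tendsto_one_div_add_atTop_nhds_zero_nat.comp hφ.tendsto_atTop
  set G0 : ℝ := ubar * ∫ s in t..T, price t x b s with hG0
  -- Phi bounds along the sequence
  have hPhin : ∀ n : ℕ, zbar - 2 / ((n : ℝ) + 1) + G0 ≤ Phi htT x b (Fn n) := by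
    intro n
    have h1 : Phi htT x b (Fn n) = ∫ s in t..T, price t x b s * trunc ubar (uap n) s :=
      Phi_bcf htT (hvB n) hub.le
    have hctrl : IsControl t T ubar (trunc ubar (uap n)) :=
      ⟨(hvB n).1, ae_of_all _ fun s _ => (hvB n).2 s⟩
    have h3 := Jint_split (x := x) (b := b) htT hub.le hctrl
    have h4 := Jint_trunc (x := x) (b := b) htT (hap n).1
    have h5 := (hap n).2.1
    rw [h1]
    rw [hG0]
    linarith
  set CP : ℝ := |price t x b T| + |x * b| * Real.exp (|b| * (T - t)) * (T - t) with hCP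
  have hPhiTend : Tendsto (fun n => Phi htT x b (Fn (φ n))) atTop (𝓝 (Phi htT x b F)) := by
    rw [tendsto_iff_dist_tendsto_zero]
    have hb : ∀ n, dist (Phi htT x b (Fn (φ n))) (Phi htT x b F) ≤ CP * dist (Fn (φ n)) F := by
      intro n
      rw [Real.dist_eq, hCP]
      exact Phi_lip htT _ _
    have hg : Tendsto (fun n => CP * dist (Fn (φ n)) F) atTop (𝓝 0) := by
      have := hdist0.const_mul CP
      simpa using this
    exact squeeze_zero (fun n => dist_nonneg) hb hg
  have hseq : Tendsto (fun n => zbar - 2 / ((φ n : ℝ) + 1) + G0) atTop (𝓝 (zbar + G0)) := by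
    have h2' : Tendsto (fun n => (2:ℝ) / ((φ n : ℝ) + 1)) atTop (𝓝 0) := by
      have := h2.const_mul (2:ℝ)
      simpa [mul_one_div, div_eq_mul_inv] using this
    have h3 := ((tendsto_const_nhds (x := zbar) (f := atTop)).sub h2').add
      (tendsto_const_nhds (x := G0) (f := atTop))
    simpa using h3
  have hPhiF : zbar + G0 ≤ Phi htT x b F :=
    le_of_tendsto_of_tendsto' hseq hPhiTend (fun n => hPhin (φ n))
  -- D limit
  have hDn : ∀ n : ℕ, Dfun htT ybar y β (Fn n) ≤ 1 / ((n : ℝ) + 1) := by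
    intro n
    have heq : Dfun htT ybar y β (Fn n)
        = ∫ s in t..T, Metric.infDist (traj t β y (uap n) s) (Set.Icc 0 ybar) :=
      Dfun_traj htT hβm hβb (hap n).1 hub.le
    rw [heq]
    exact ((hap n).2.2).le
  have hDTend : Tendsto (fun n => Dfun htT ybar y β (Fn (φ n))) atTop
      (𝓝 (Dfun htT ybar y β F)) := by
    rw [tendsto_iff_dist_tendsto_zero]
    have hb : ∀ n, dist (Dfun htT ybar y β (Fn (φ n))) (Dfun htT ybar y β F)
        ≤ dist (Fn (φ n)) F * (T - t) := by
      intro n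
      rw [Real.dist_eq]
      exact Dfun_lip htT hβm hβb _ _
    have hg : Tendsto (fun n => dist (Fn (φ n)) F * (T - t)) atTop (𝓝 0) := by
      have := hdist0.mul_const (T - t)
      simpa using this
    exact squeeze_zero (fun n => dist_nonneg) hb hg
  have hDF0 : Dfun htT ybar y β F = 0 := by
    refine le_antisymm ?_ (Dfun_nonneg htT F)
    exact le_of_tendsto_of_tendsto' hDTend h2 (fun n => hDn (φ n))
  have hfeasF := feas htT hyb hβm hβb hFA hy0 hDF0
  obtain ⟨us, husB, hcum⟩ := recover htT hub hFA
  have husC : IsControl t T ubar us := ⟨husB.1, ae_of_all _ fun s _ => husB.2 s⟩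
  have htraj : ∀ s (hs : s ∈ Set.Icc t T), traj t β y us s
      = y + (∫ r in t..s, β r) - F (Set.projIcc t T htT s) := by
    intro s hs
    rw [traj, intervalIntegral.integral_sub (beta_II hβm hβb t s) (husB.II t s)]
    rw [Set.projIcc_of_mem htT hs]
    have : (∫ r in t..s, us r) = cum t us s := rfl
    rw [this, hcum ⟨s, hs⟩]
    ring
  have hAdm : Admissible t T ubar ybar β y us :=
    ⟨husC, fun s hs => by rw [htraj s hs]; exact hfeasF s hs⟩
  refine ⟨us, hAdm, ?_⟩
  have hFeq : bcf htT husB = F := by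
    ext p
    rw [bcf_apply]
    exact hcum p
  have h6 := Phi_bcf (x := x) (b := b) htT husB hub.le
  rw [hFeq] at h6
  have h7 := Jint_split (x := x) (b := b) htT hub.le husC
  linarith [hPhiF, h6, h7, hG0]

end Cor54

/-- Corollary 5.4 (deterministic-price instance): `z* = sSup{z ≤ 0 : W = 0}` satisfies
`W(t,x,y,z*) = 0`; an admissible `u*` with `∫_t^T P(s)(u*(s) − ū) ds ≥ z*` exists, and every
such `u*` is optimal for the constrained problem. -/
theorem stmt2 (t T ubar ybar b x y : ℝ) (β : ℝ → ℝ)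
    (ht : 0 ≤ t) (htT : t ≤ T) (hub : 0 < ubar) (hyb : 0 < ybar)
    (hβm : Measurable β) (hβb : ∃ M, ∀ s, |β s| ≤ M)
    (hx : 0 ≤ x) (hadm : ∃ u, Admissible t T ubar ybar β y u) :
    W t T ubar ybar x b β y (sSup {z : ℝ | z ≤ 0 ∧ W t T ubar ybar x b β y z = 0}) = 0 ∧
    (∃ u, Admissible t T ubar ybar β y u ∧
      sSup {z : ℝ | z ≤ 0 ∧ W t T ubar ybar x b β y z = 0}
        ≤ ∫ s in t..T, price t x b s * (u s - ubar)) ∧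
    (∀ u, Admissible t T ubar ybar β y u →
      sSup {z : ℝ | z ≤ 0 ∧ W t T ubar ybar x b β y z = 0}
        ≤ ∫ s in t..T, price t x b s * (u s - ubar) →
      (∫ s in t..T, price t x b s * u s)
        = sSup {v : ℝ | ∃ u', Admissible t T ubar ybar β y u' ∧
            v = ∫ s in t..T, price t x b s * u' s}) := by
  obtain ⟨ustar, hAdm, hzle⟩ := Cor54.main_exists htT hub hyb hβm hβb hx hadm
  have hSbdd : BddAbove {z : ℝ | z ≤ 0 ∧ W t T ubar ybar x b β y z = 0} :=
    ⟨0, fun z hz => hz.1⟩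
  have hmemS : ∀ u, Admissible t T ubar ybar β y u →
      Cor54.Jint t T ubar x b u ∈ {z : ℝ | z ≤ 0 ∧ W t T ubar ybar x b β y z = 0} :=
    fun u hu => ⟨Cor54.Jint_nonpos htT hub.le hx hu.1,
      Cor54.W_zero_of_admissible htT hub hu le_rfl⟩
  have hstar := hmemS ustar hAdm
  have hzeq : sSup {z : ℝ | z ≤ 0 ∧ W t T ubar ybar x b β y z = 0}
      = Cor54.Jint t T ubar x b ustar := le_antisymm hzle (le_csSup hSbdd hstar)
  refine ⟨?_, ⟨ustar, hAdm, ?_⟩, ?_⟩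
  · rw [hzeq]
    exact hstar.2
  · exact hzeq.le
  · intro u hu hge
    have hge' : sSup {z : ℝ | z ≤ 0 ∧ W t T ubar ybar x b β y z = 0}
        ≤ Cor54.Jint t T ubar x b u := hge
    have h1 := hmemS u hu
    have hgr : IsGreatest {v : ℝ | ∃ u', Admissible t T ubar ybar β y u' ∧
        v = ∫ s in t..T, price t x b s * u' s} (∫ s in t..T, price t x b s * u s) := by
      constructor
      · exact ⟨u, hu, rfl⟩
      · rintro v ⟨u', hu', rfl⟩
        have h3 : Cor54.Jint t T ubar x b u'
            ≤ sSup {z : ℝ | z ≤ 0 ∧ W t T ubar ybar x b β y z = 0} :=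
          le_csSup hSbdd (hmemS u' hu')
        have h4 := Cor54.Jint_split (x := x) (b := b) htT hub.le hu'.1
        have h5 := Cor54.Jint_split (x := x) (b := b) htT hub.le hu.1
        linarith [h3, h4, h5, hge']
    exact hgr.csSup_eq.symm
end
end

section
/- Assume x ≥ 0 and z ≥ 0. Then W(t,x,y,z) = z + ⨅ over all controls u of ∫_t^T [ P(s)·(ū − u(s)) + dist(Y^{t,y,u}(s), K) ] ds. -/
open MeasureTheory

noncomputable section

section Aux

variable {t T ubar ybar b x y z : ℝ} {β u : ℝ → ℝ}

/-- Integrability of the price term. -/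
lemma price_intIntegrable (htT : t ≤ T) (hx : 0 ≤ x) (hu : IsControl t T ubar u) :
    IntervalIntegrable (fun s => price t x b s * (ubar - u s)) volume t T := by
  rw [intervalIntegrable_iff, Set.uIoc_of_le htT]
  have hmeas : Measurable (fun s => price t x b s * (ubar - u s)) := by
    have : Continuous (fun s => price t x b s) := by
      unfold price; fun_prop
    exact this.measurable.mul (measurable_const.sub hu.1)
  refine Integrable.mono' (g := fun _ => x * Real.exp (|b| * (T - t)) * ubar)
    (integrableOn_const measure_Ioc_lt_top.ne)
    hmeas.aestronglyMeasurable ?_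
  rw [ae_restrict_iff' (measurableSet_Ioc)]
  filter_upwards [hu.2] with s hs hsm
  have hsI : s ∈ Set.Icc t T := Set.Ioc_subset_Icc_self hsm
  have h1 := hs hsI
  have hp0 : 0 ≤ price t x b s := mul_nonneg hx (Real.exp_pos _).le
  have hpb : price t x b s ≤ x * Real.exp (|b| * (T - t)) := by
    unfold price
    refine mul_le_mul_of_nonneg_left (Real.exp_le_exp.2 ?_) hx
    calc b * (s - t) ≤ |b * (s - t)| := le_abs_self _
      _ = |b| * |s - t| := abs_mul _ _
      _ ≤ |b| * (T - t) := by
          refine mul_le_mul_of_nonneg_left ?_ (abs_nonneg b)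
          rw [abs_of_nonneg (by linarith [hsI.1])]; linarith [hsI.2]
  have hub : 0 ≤ ubar - u s := by linarith [h1.2]
  have hub2 : ubar - u s ≤ ubar := by linarith [h1.1]
  rw [Real.norm_eq_abs, abs_of_nonneg (mul_nonneg hp0 hub)]
  exact mul_le_mul hpb hub2 hub (mul_nonneg hx (Real.exp_pos _).le)

/-- Integrability of the distance term. -/
lemma dist_intIntegrable (htT : t ≤ T) (hβm : Measurable β) (hβb : ∃ M, ∀ s, |β s| ≤ M)
    (hu : IsControl t T ubar u) :
    IntervalIntegrable
      (fun s => Metric.infDist (traj t β y u s) (Set.Icc 0 ybar)) volume t T := by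
  obtain ⟨M, hM⟩ := hβb
  have hgi : IntegrableOn (fun r => β r - u r) (Set.Icc t T) volume := by
    refine Integrable.mono' (g := fun _ => M + |ubar|)
      (integrableOn_const measure_Icc_lt_top.ne)
      ((hβm.sub hu.1).aestronglyMeasurable) ?_
    rw [ae_restrict_iff' measurableSet_Icc]
    filter_upwards [hu.2] with s hs hsm
    have h1 := hs hsm
    have : |u s| ≤ |ubar| := by
      rw [abs_of_nonneg h1.1, abs_of_nonneg (h1.1.trans h1.2)]; exact h1.2
    calc ‖β s - u s‖ ≤ |β s| + |u s| := abs_sub _ _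
      _ ≤ M + |ubar| := add_le_add (hM s) this
  have hgi' : IntegrableOn (fun r => β r - u r) (Set.uIcc t T) volume := by
    rwa [Set.uIcc_of_le htT]
  have hcont : ContinuousOn (fun s => traj t β y u s) (Set.uIcc t T) := by
    unfold traj
    exact continuousOn_const.add (intervalIntegral.continuousOn_primitive_interval hgi')
  have hcont2 : ContinuousOn
      (fun s => Metric.infDist (traj t β y u s) (Set.Icc 0 ybar)) (Set.uIcc t T) :=
    (Metric.continuous_infDist_pt _).comp_continuousOn hcont
  rw [Set.uIcc_of_le htT] at hcont2
  rw [intervalIntegrable_iff, Set.uIoc_of_le htT]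
  exact (hcont2.integrableOn_Icc).mono_set Set.Ioc_subset_Icc_self

/-- Nonnegativity of the price integral. -/
lemma price_integral_nonneg (htT : t ≤ T) (hx : 0 ≤ x) (hu : IsControl t T ubar u) :
    0 ≤ ∫ s in t..T, price t x b s * (ubar - u s) := by
  refine intervalIntegral.integral_nonneg_of_ae_restrict htT ?_
  rw [Filter.EventuallyLE, ae_restrict_iff' measurableSet_Icc]
  filter_upwards [hu.2] with s hs hsm
  have h1 := hs hsm
  exact mul_nonneg (mul_nonneg hx (Real.exp_pos _).le) (by linarith [h1.2])

/-- The key per-control identity. -/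
lemma levelCost_eq (htT : t ≤ T) (hβm : Measurable β) (hβb : ∃ M, ∀ s, |β s| ≤ M)
    (hx : 0 ≤ x) (hz : 0 ≤ z) (hu : IsControl t T ubar u) :
    levelCost t T ubar ybar x b β y z u
      = z + ∫ s in t..T, (price t x b s * (ubar - u s)
          + Metric.infDist (traj t β y u s) (Set.Icc 0 ybar)) := by
  have hI1 := price_intIntegrable (b := b) htT hx hu
  have hI2 := dist_intIntegrable (y := y) (ybar := ybar) htT hβm hβb hu
  have hA := price_integral_nonneg (b := b) htT hx hu
  have hneg : (∫ s in t..T, price t x b s * (u s - ubar))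
      = - ∫ s in t..T, price t x b s * (ubar - u s) := by
    rw [← intervalIntegral.integral_neg]
    congr 1; funext s; ring
  have hD : 0 ≤ ∫ s in t..T, Metric.infDist (traj t β y u s) (Set.Icc 0 ybar) :=
    intervalIntegral.integral_nonneg htT fun s _ => Metric.infDist_nonneg
  unfold levelCost
  rw [hneg, intervalIntegral.integral_add hI1 hI2]
  rw [max_eq_left (by linarith)]
  ring

end Aux

/-- Proposition 5.3, last claim (deterministic-price instance): for `z ≥ 0`,
`W(t,x,y,z) = z + inf over controls of ∫_t^T [P(s)(ū − u(s)) + dist(Y(s), K)] ds`. -/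
theorem stmt3 (t T ubar ybar b x y z : ℝ) (β : ℝ → ℝ)
    (ht : 0 ≤ t) (htT : t ≤ T) (hub : 0 < ubar) (hyb : 0 < ybar)
    (hβm : Measurable β) (hβb : ∃ M, ∀ s, |β s| ≤ M)
    (hx : 0 ≤ x) (hz : 0 ≤ z) :
    W t T ubar ybar x b β y z
      = z + sInf {c : ℝ | ∃ u, IsControl t T ubar u ∧
          c = ∫ s in t..T,
              (price t x b s * (ubar - u s)
                + Metric.infDist (traj t β y u s) (Set.Icc 0 ybar))} := by
  set f : (ℝ → ℝ) → ℝ := fun u => ∫ s in t..T,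
      (price t x b s * (ubar - u s)
        + Metric.infDist (traj t β y u s) (Set.Icc 0 ybar)) with hfdef
  set S : Set ℝ := {c : ℝ | ∃ u, IsControl t T ubar u ∧ c = f u} with hSdef
  have hfnn : ∀ u : ℝ → ℝ, IsControl t T ubar u → 0 ≤ f u := by
    intro u hu
    have hI1 := price_intIntegrable (b := b) htT hx hu
    have hI2 := dist_intIntegrable (y := y) (ybar := ybar) htT hβm hβb hu
    have hA := price_integral_nonneg (b := b) htT hx hu
    have hD : 0 ≤ ∫ s in t..T, Metric.infDist (traj t β y u s) (Set.Icc 0 ybar) :=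
      intervalIntegral.integral_nonneg htT fun s _ => Metric.infDist_nonneg
    rw [hfdef]
    simp only
    rw [intervalIntegral.integral_add hI1 hI2]
    linarith
  have hne : S.Nonempty := by
    refine ⟨f (fun _ => ubar), fun _ => ubar,
      ⟨measurable_const, Filter.Eventually.of_forall fun s _ => ⟨hub.le, le_rfl⟩⟩, rfl⟩
  have hbdd : BddBelow S := by
    refine ⟨0, fun c hc => ?_⟩
    obtain ⟨u, hu, rfl⟩ := hc
    exact hfnn u hu
  have hset : {c : ℝ | ∃ u, IsControl t T ubar u ∧
      c = levelCost t T ubar ybar x b β y z u} = (fun c => z + c) '' S := by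
    ext c
    constructor
    · rintro ⟨u, hu, rfl⟩
      exact ⟨f u, ⟨u, hu, rfl⟩, (levelCost_eq htT hβm hβb hx hz hu).symm⟩
    · rintro ⟨c', ⟨u, hu, rfl⟩, rfl⟩
      exact ⟨u, hu, (levelCost_eq htT hβm hβb hx hz hu).symm⟩
  have hmap := OrderIso.map_csInf' (OrderIso.addLeft z) hne hbdd
  rw [W, hset]
  rw [show (fun c => z + c) '' S = (⇑(OrderIso.addLeft z)) '' S from rfl]
  rw [← hmap]
  rfl
end
end

section
/- Let M ≥ 0 be a bound with |β(s)| ≤ M for all s ∈ [t,T]. Then for every x ≥ 0, y ∈ K and z ∈ ℝ one has |W(t,x,y,z) − max(z,0)| ≤ ū·x·∫_t^T e^{b(s−t)} ds + (M + ū)·(T − t)². In particular, for fixed (x,y,z) with y ∈ K, W(t,x,y,z) → max(z,0) as t → T. -/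
open MeasureTheory

noncomputable section

-- lower bound on each cost
lemma cost_lb (t T ubar ybar x b : ℝ) (β : ℝ → ℝ) (y z : ℝ) (u : ℝ → ℝ)
    (htT : t ≤ T) (hub : 0 < ubar) (hx : 0 ≤ x) (hu : IsControl t T ubar u) :
    max z 0 - G t T ubar x b ≤ levelCost t T ubar ybar x b β y z u := by
  have hPc : Continuous (price t x b) := by
    unfold price; fun_prop
  have hPn : ∀ s, 0 ≤ price t x b s := fun s => mul_nonneg hx (Real.exp_pos _).le
  set I := ∫ s in t..T, price t x b s * (u s - ubar) with hI
  have hbd : |I| ≤ G t T ubar x b := by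
    have hg : IntervalIntegrable (fun s => ubar * price t x b s) volume t T :=
      ((continuous_const.mul hPc).intervalIntegrable t T)
    have hae : ∀ᵐ s ∂(volume : Measure ℝ).restrict (Set.uIoc t T),
        ‖price t x b s * (u s - ubar)‖ ≤ ubar * price t x b s := by
      have h1 : ∀ᵐ s ∂(volume : Measure ℝ).restrict (Set.uIoc t T),
          s ∈ Set.Icc t T → u s ∈ Set.Icc 0 ubar := ae_restrict_of_ae hu.2
      have h2 : ∀ᵐ s ∂(volume : Measure ℝ).restrict (Set.uIoc t T), s ∈ Set.uIoc t T :=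
        ae_restrict_mem measurableSet_uIoc
      filter_upwards [h1, h2] with s h1 h2
      rw [Set.uIoc_of_le htT] at h2
      have hs : u s ∈ Set.Icc 0 ubar := h1 (Set.Ioc_subset_Icc_self h2)
      obtain ⟨hs0, hs1⟩ := hs
      have : |u s - ubar| ≤ ubar := by
        rw [abs_le]; constructor <;> linarith
      calc ‖price t x b s * (u s - ubar)‖ = price t x b s * |u s - ubar| := by
            rw [Real.norm_eq_abs, abs_mul, abs_of_nonneg (hPn s)]
        _ ≤ price t x b s * ubar := mul_le_mul_of_nonneg_left this (hPn s)
        _ = ubar * price t x b s := mul_comm _ _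
    have := intervalIntegral.norm_integral_le_abs_of_norm_le hae hg
    rw [Real.norm_eq_abs] at this
    refine this.trans ?_
    rw [intervalIntegral.integral_const_mul]
    rw [abs_of_nonneg]
    · exact le_refl _
    · exact mul_nonneg hub.le (intervalIntegral.integral_nonneg htT fun s _ => hPn s)
  have hD : 0 ≤ ∫ s in t..T, Metric.infDist (traj t β y u s) (Set.Icc 0 ybar) :=
    intervalIntegral.integral_nonneg htT fun s _ => Metric.infDist_nonneg
  have hmax : max z 0 - max (z - I) 0 ≤ |I| := by
    have h := abs_max_sub_max_le_abs z (z - I) 0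
    have h2 : |z - (z - I)| = |I| := by ring_nf
    rw [h2] at h
    exact (le_abs_self _).trans h
  have habs := abs_le.mp hbd
  unfold levelCost
  rw [← hI]
  linarith

lemma key_est (t T ubar ybar b M x : ℝ) (β : ℝ → ℝ)
    (htT : t ≤ T) (hub : 0 < ubar) (hβm : Measurable β) (hM : 0 ≤ M)
    (hβbd : ∀ s ∈ Set.Icc t T, |β s| ≤ M) (hx : 0 ≤ x)
    {y : ℝ} (hy : y ∈ Set.Icc 0 ybar) (z : ℝ) :
    |W t T ubar ybar x b β y z - max z 0|
      ≤ ubar * x * (∫ s in t..T, Real.exp (b * (s - t))) + (M + ubar) * (T - t) ^ 2 := by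
  have hPc : Continuous (price t x b) := by unfold price; fun_prop
  have hPn : ∀ s, 0 ≤ price t x b s := fun s => mul_nonneg hx (Real.exp_pos _).le
  have hG0 : 0 ≤ G t T ubar x b :=
    mul_nonneg hub.le (intervalIntegral.integral_nonneg htT fun s _ => hPn s)
  have hGeq : G t T ubar x b = ubar * x * ∫ s in t..T, Real.exp (b * (s - t)) := by
    unfold G price
    rw [intervalIntegral.integral_const_mul, mul_assoc]
  set u0 : ℝ → ℝ := fun _ => 0 with hu0def
  have hu0 : IsControl t T ubar u0 :=
    ⟨measurable_const, .of_forall fun s _ => ⟨le_refl 0, hub.le⟩⟩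
  set S := {c : ℝ | ∃ u, IsControl t T ubar u ∧ c = levelCost t T ubar ybar x b β y z u}
  have hne : S.Nonempty := ⟨levelCost t T ubar ybar x b β y z u0, u0, hu0, rfl⟩
  have hbdd : BddBelow S := by
    refine ⟨max z 0 - G t T ubar x b, ?_⟩
    rintro c ⟨u, hu, rfl⟩
    exact cost_lb t T ubar ybar x b β y z u htT hub hx hu
  have hlb : max z 0 - G t T ubar x b ≤ W t T ubar ybar x b β y z := by
    refine le_csInf hne ?_
    rintro c ⟨u, hu, rfl⟩
    exact cost_lb t T ubar ybar x b β y z u htT hub hx hu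
  -- value at u0
  have hI0 : (∫ s in t..T, price t x b s * (u0 s - ubar)) = -(G t T ubar x b) := by
    have h1 : (fun s => price t x b s * (u0 s - ubar))
        = fun s => -(ubar * price t x b s) := by
      funext s; simp [hu0def]; ring
    rw [h1, intervalIntegral.integral_neg, intervalIntegral.integral_const_mul]
    rfl
  have htr : (fun s => traj t β y u0 s) = fun s => y + ∫ r in t..s, β r := by
    funext s; unfold traj; simp [hu0def]
  have hβint : IntegrableOn β (Set.Icc t T) volume := by
    refine Integrable.mono' (integrable_const M) hβm.aestronglyMeasurable.restrict ?_
    refine (ae_restrict_iff' measurableSet_Icc).2 (.of_forall fun s hs => ?_)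
    simpa [Real.norm_eq_abs] using hβbd s hs
  have hFcont : ContinuousOn (fun s => ∫ r in t..s, β r) (Set.Icc t T) := by
    have := intervalIntegral.continuousOn_primitive_interval
      (f := β) (μ := volume) (a := t) (b := T) (by rwa [Set.uIcc_of_le htT])
    rwa [Set.uIcc_of_le htT] at this
  have hgcont : ContinuousOn
      (fun s => Metric.infDist (traj t β y u0 s) (Set.Icc 0 ybar)) (Set.Icc t T) := by
    rw [show (fun s => Metric.infDist (traj t β y u0 s) (Set.Icc 0 ybar))
        = fun s => Metric.infDist (y + ∫ r in t..s, β r) (Set.Icc 0 ybar) by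
      funext s; rw [congrFun htr s]]
    exact (Metric.continuous_infDist_pt _).comp_continuousOn (continuousOn_const.add hFcont)
  have hgint : IntervalIntegrable
      (fun s => Metric.infDist (traj t β y u0 s) (Set.Icc 0 ybar)) volume t T := by
    apply ContinuousOn.intervalIntegrable
    rwa [Set.uIcc_of_le htT]
  have hgle : ∀ s ∈ Set.Icc t T,
      Metric.infDist (traj t β y u0 s) (Set.Icc 0 ybar) ≤ M * (s - t) := by
    intro s hs
    have h1 : Metric.infDist (traj t β y u0 s) (Set.Icc 0 ybar)
        ≤ dist (traj t β y u0 s) y := Metric.infDist_le_dist_of_mem hy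
    have h2 : dist (traj t β y u0 s) y = |∫ r in t..s, β r| := by
      rw [congrFun htr s, Real.dist_eq]; congr 1; ring
    have h3 : ‖∫ r in t..s, β r‖ ≤ M * |s - t| := by
      refine intervalIntegral.norm_integral_le_of_norm_le_const fun r hr => ?_
      rw [Set.uIoc_of_le hs.1] at hr
      simpa [Real.norm_eq_abs] using hβbd r ⟨hr.1.le, hr.2.trans hs.2⟩
    rw [Real.norm_eq_abs, abs_of_nonneg (show (0:ℝ) ≤ s - t by linarith [hs.1])] at h3
    linarith
  have hMint : IntervalIntegrable (fun s => M * (s - t)) volume t T :=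
    (by fun_prop : Continuous fun s : ℝ => M * (s - t)).intervalIntegrable t T
  have hDle : (∫ s in t..T, Metric.infDist (traj t β y u0 s) (Set.Icc 0 ybar))
      ≤ M * (T - t) ^ 2 / 2 := by
    refine (intervalIntegral.integral_mono_on htT hgint hMint hgle).trans ?_
    rw [intervalIntegral.integral_const_mul]
    have hid : (∫ s in t..T, (s - t)) = (T - t) ^ 2 / 2 := by
      rw [intervalIntegral.integral_sub intervalIntegral.intervalIntegrable_id
        intervalIntegrable_const]
      simp [smul_eq_mul]
      ring
    rw [hid]; exact le_of_eq (by ring)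
  have hWub : W t T ubar ybar x b β y z
      ≤ max z 0 + G t T ubar x b + (M + ubar) * (T - t) ^ 2 := by
    refine (csInf_le hbdd ⟨u0, hu0, rfl⟩).trans ?_
    unfold levelCost
    rw [hI0, sub_neg_eq_add]
    have hmax : max (z + G t T ubar x b) 0 ≤ max z 0 + G t T ubar x b :=
      max_le (by linarith [le_max_left z 0])
        (add_nonneg (le_max_right z 0) hG0)
    have hsq : M * (T - t) ^ 2 / 2 ≤ (M + ubar) * (T - t) ^ 2 := by
      nlinarith [sq_nonneg (T - t)]
    linarith
  have hsq0 : 0 ≤ (M + ubar) * (T - t) ^ 2 :=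
    mul_nonneg (by linarith) (sq_nonneg _)
  rw [abs_le]
  constructor
  · linarith [hlb, hGeq, hsq0]
  · linarith [hWub, hGeq]

/-- Proposition 5.3, terminal-time behaviour (deterministic-price instance):
quantitative estimate `|W(t,x,y,z) − max(z,0)| ≤ ū x ∫_t^T e^{b(s−t)} ds + (M+ū)(T−t)²`
for `y ∈ K`, and the resulting limit `W(t,x,y,z) → max(z,0)` as `t → T`. -/
theorem stmt6 (t T ubar ybar b M : ℝ) (β : ℝ → ℝ)
    (ht : 0 ≤ t) (htT : t ≤ T) (hub : 0 < ubar) (hyb : 0 < ybar)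
    (hβm : Measurable β) (hM : 0 ≤ M) (hβbd : ∀ s ∈ Set.Icc t T, |β s| ≤ M) :
    (∀ x, 0 ≤ x → ∀ y ∈ Set.Icc 0 ybar, ∀ z : ℝ,
      |W t T ubar ybar x b β y z - max z 0|
        ≤ ubar * x * (∫ s in t..T, Real.exp (b * (s - t))) + (M + ubar) * (T - t) ^ 2) ∧
    (∀ x, 0 ≤ x → ∀ y ∈ Set.Icc 0 ybar, ∀ z : ℝ,
      Filter.Tendsto (fun t' => W t' T ubar ybar x b β y z)
        (nhdsWithin T (Set.Icc t T)) (nhds (max z 0))) := by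
  constructor
  · intro x hx y hy z
    exact key_est t T ubar ybar b M x β htT hub hβm hM hβbd hx hy z
  · intro x hx y hy z
    rw [← tendsto_sub_nhds_zero_iff]
    have habs : Filter.Tendsto (fun t' => |W t' T ubar ybar x b β y z - max z 0|)
        (nhdsWithin T (Set.Icc t T)) (nhds 0) := by
      apply squeeze_zero' (g := fun t' => ubar * x * ((T - t') * Real.exp (|b| * (T - t)))
          + (M + ubar) * (T - t') ^ 2)
      · exact .of_forall fun t' => abs_nonneg _
      · filter_upwards [eventually_mem_nhdsWithin] with t' ht'
        obtain ⟨htt', ht'T⟩ := ht'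
        have hkey := key_est t' T ubar ybar b M x β ht'T hub hβm hM
          (fun s hs => hβbd s ⟨htt'.trans hs.1, hs.2⟩) hx hy z
        refine hkey.trans (add_le_add ?_ (le_refl _))
        have hint : (∫ s in t'..T, Real.exp (b * (s - t')))
            ≤ (T - t') * Real.exp (|b| * (T - t)) := by
          have h1 : (∫ s in t'..T, Real.exp (b * (s - t')))
              ≤ ∫ _s in t'..T, Real.exp (|b| * (T - t)) := by
            refine intervalIntegral.integral_mono_on ht'T
              ((by fun_prop : Continuous fun s => Real.exp (b * (s - t'))).intervalIntegrable _ _)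
              intervalIntegrable_const ?_
            intro s hs
            apply Real.exp_le_exp.2
            have h2 : b * (s - t') ≤ |b| * (s - t') :=
              mul_le_mul_of_nonneg_right (le_abs_self b) (by linarith [hs.1])
            have h3 : |b| * (s - t') ≤ |b| * (T - t) :=
              mul_le_mul_of_nonneg_left (by linarith [hs.2, htt']) (abs_nonneg b)
            linarith
          rwa [intervalIntegral.integral_const, smul_eq_mul] at h1
        exact mul_le_mul_of_nonneg_left hint (mul_nonneg hub.le hx)
      · have hc : Continuous (fun t' : ℝ =>
            ubar * x * ((T - t') * Real.exp (|b| * (T - t)))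
              + (M + ubar) * (T - t') ^ 2) := by fun_prop
        have h0 := (hc.tendsto T).mono_left
          (nhdsWithin_le_nhds (s := Set.Icc t T))
        simpa using h0
    exact (tendsto_zero_iff_abs_tendsto_zero _).2 habs
end
end

section
/- Let 0 ≤ t* ≤ T* ≤ T and assume β(s) ≥ ū for a.e. s ∈ [t*, T*] and 0 ≤ β(s) ≤ ū for a.e. s ∈ [T*, T]. Fix t with t* ≤ t ≤ T and set ŷ_t = ȳ − max( ∫_t^{max(T*,t)} (β(s) − ū) ds , 0 ). Then there exists a control admissible for (t, y) if and only if y ∈ [0, ŷ_t]. -/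
open MeasureTheory

noncomputable section

/-- Interval integrability of a measurable globally bounded function. -/
lemma intervalIntegrable_of_bounded {f : ℝ → ℝ} (hf : Measurable f) {C : ℝ}
    (hC : ∀ s, |f s| ≤ C) (a b : ℝ) : IntervalIntegrable f volume a b := by
  rw [intervalIntegrable_iff]
  have hconst : IntegrableOn (fun _ : ℝ => C) (Set.uIoc a b) volume :=
    integrableOn_const measure_Ioc_lt_top.ne enorm_ne_top
  refine hconst.mono' hf.aestronglyMeasurable ?_
  exact ae_of_all _ fun s => by simpa [Real.norm_eq_abs] using hC s

/-- Proposition 4.1 (for initial times `t ≥ t*`): with `β ≥ ū` a.e. on `[t*, T*]` and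
`0 ≤ β ≤ ū` a.e. on `[T*, T]`, an admissible control for `(t, y)` exists iff
`y ∈ [0, ŷ_t]` where `ŷ_t = ȳ − max(∫_t^{max(T*,t)} (β(s) − ū) ds, 0)`. -/
theorem stmt7 (t T tstar Tstar ubar ybar : ℝ) (β : ℝ → ℝ)
    (hts : 0 ≤ tstar) (h1 : tstar ≤ Tstar) (h2 : Tstar ≤ T)
    (hub : 0 < ubar) (hyb : 0 < ybar)
    (hβm : Measurable β) (hβb : ∃ M', ∀ s, |β s| ≤ M')
    (hfill : ∀ᵐ s ∂(volume : Measure ℝ), s ∈ Set.Icc tstar Tstar → ubar ≤ β s)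
    (hafter : ∀ᵐ s ∂(volume : Measure ℝ), s ∈ Set.Icc Tstar T → β s ∈ Set.Icc 0 ubar)
    (htt : tstar ≤ t) (htT : t ≤ T) (y : ℝ) :
    (∃ u, Admissible t T ubar ybar β y u)
      ↔ y ∈ Set.Icc (0 : ℝ) (ybar - max (∫ s in t..(max Tstar t), (β s - ubar)) 0) := by
  classical
  obtain ⟨M', hM'⟩ := hβb
  have hM'0 : 0 ≤ M' := (abs_nonneg _).trans (hM' 0)
  set m := max Tstar t with hm
  have htm : t ≤ m := le_max_right _ _
  have hmT : m ≤ T := max_le h2 htT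
  have hTm : Tstar ≤ m := le_max_left _ _
  have hbint : ∀ a b : ℝ, IntervalIntegrable (fun s => β s - ubar) volume a b := by
    intro a b
    refine intervalIntegrable_of_bounded (hβm.sub measurable_const) (C := M' + |ubar|)
      (fun s => ?_) a b
    have h3 : |β s - ubar| ≤ |β s| + |ubar| := abs_sub _ _
    have := hM' s
    show |β s - ubar| ≤ M' + |ubar|
    linarith
  have hfill' : ∀ᵐ s ∂(volume : Measure ℝ), s ∈ Set.Icc t m → ubar ≤ β s := by
    rcases le_total t Tstar with h | h
    · have hmt : m = Tstar := max_eq_left h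
      filter_upwards [hfill] with s hs hsm
      exact hs ⟨htt.trans hsm.1, hmt ▸ hsm.2⟩
    · have hmt : m = t := max_eq_right h
      have h0 : ∀ᵐ s ∂(volume : Measure ℝ), s ∉ Set.Icc t m := by
        rw [hmt, Set.Icc_self]
        exact measure_eq_zero_iff_ae_notMem.mp Real.volume_singleton
      filter_upwards [h0] with s hs hsm
      exact absurd hsm hs
  have hnn : ∀ a b : ℝ, t ≤ a → a ≤ b → b ≤ m → 0 ≤ ∫ r in a..b, (β r - ubar) := by
    intro a b ha hab hbm
    apply intervalIntegral.integral_nonneg_of_ae_restrict hab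
    have hae := ae_restrict_of_ae (μ := volume) (s := Set.Icc a b) hfill'
    have hmem := ae_restrict_mem (μ := volume) (measurableSet_Icc : MeasurableSet (Set.Icc a b))
    filter_upwards [hae, hmem] with r hr1 hr2
    have := hr1 ⟨ha.trans hr2.1, hr2.2.trans hbm⟩
    simp only [Pi.zero_apply]
    linarith
  set A := ∫ s in t..m, (β s - ubar) with hA
  have hA0 : 0 ≤ A := hnn t m le_rfl htm le_rfl
  have hmaxA : max A 0 = A := max_eq_left hA0
  rw [hmaxA, Set.mem_Icc]
  constructor
  · rintro ⟨u, ⟨⟨hum, hub'⟩, htraj⟩⟩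
    have h0 := htraj t ⟨le_refl t, htT⟩
    have htraj_t : traj t β y u t = y := by simp [traj]
    rw [htraj_t, Set.mem_Icc] at h0
    have hm' := htraj m ⟨htm, hmT⟩
    rw [Set.mem_Icc] at hm'
    have hui : IntervalIntegrable (fun s => β s - u s) volume t m := by
      rw [intervalIntegrable_iff]
      have hconst : IntegrableOn (fun _ : ℝ => M' + ubar) (Set.uIoc t m) volume :=
        integrableOn_const measure_Ioc_lt_top.ne enorm_ne_top
      refine hconst.mono' ((hβm.sub hum).aestronglyMeasurable) ?_
      have hae := ae_restrict_of_ae (μ := volume) (s := Set.uIoc t m) hub'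
      have hmem := ae_restrict_mem (μ := volume)
        (measurableSet_uIoc : MeasurableSet (Set.uIoc t m))
      filter_upwards [hae, hmem] with s hs1 hs2
      rw [Set.uIoc_of_le htm] at hs2
      have hsI : s ∈ Set.Icc t T := ⟨le_of_lt hs2.1, hs2.2.trans hmT⟩
      have hu := hs1 hsI
      rw [Set.mem_Icc] at hu
      have h3 : |β s - u s| ≤ |β s| + |u s| := abs_sub _ _
      have h4 : |u s| ≤ ubar := abs_le.2 ⟨by linarith [hu.1], hu.2⟩
      have := hM' s
      rw [Real.norm_eq_abs]
      linarith
    have hle : A ≤ ∫ s in t..m, (β s - u s) := by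
      apply intervalIntegral.integral_mono_ae_restrict htm (hbint t m) hui
      have hae := ae_restrict_of_ae (μ := volume) (s := Set.Icc t m) hub'
      have hmem := ae_restrict_mem (μ := volume)
        (measurableSet_Icc : MeasurableSet (Set.Icc t m))
      filter_upwards [hae, hmem] with s hs1 hs2
      have hu := hs1 ⟨hs2.1, hs2.2.trans hmT⟩
      rw [Set.mem_Icc] at hu
      show β s - ubar ≤ β s - u s
      linarith [hu.2]
    have hfin : y + A ≤ ybar := by
      have h2' := hm'.2
      simp only [traj] at h2'
      linarith
    exact ⟨h0.1, by linarith⟩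
  · rintro ⟨hy0, hy1⟩
    refine ⟨fun s => if s ≤ m then ubar else β s, ⟨?_, ?_⟩, ?_⟩
    · exact Measurable.ite measurableSet_Iic measurable_const hβm
    · filter_upwards [hafter] with s hs hsT
      by_cases hsm : s ≤ m
      · simp only [if_pos hsm]
        exact ⟨le_of_lt hub, le_refl _⟩
      · simp only [if_neg hsm]
        push_neg at hsm
        exact hs ⟨hTm.trans hsm.le, hsT.2⟩
    · intro s hs
      have huint : ∀ a b : ℝ,
          IntervalIntegrable (fun r => β r - if r ≤ m then ubar else β r) volume a b := by
        intro a b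
        refine intervalIntegrable_of_bounded
          (hβm.sub (Measurable.ite measurableSet_Iic measurable_const hβm))
          (C := M' + (M' + ubar)) (fun r => ?_) a b
        have h3 : |β r - if r ≤ m then ubar else β r| ≤ |β r| + |if r ≤ m then ubar else β r| :=
          abs_sub _ _
        have h4 : |if r ≤ m then ubar else β r| ≤ M' + ubar := by
          by_cases hrm : r ≤ m
          · simp only [if_pos hrm]
            rw [abs_of_pos hub]; linarith
          · simp only [if_neg hrm]
            linarith [hM' r]
        have := hM' r
        show |β r - (if r ≤ m then ubar else β r)| ≤ M' + (M' + ubar)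
        linarith
      have key1 : ∀ s' : ℝ, t ≤ s' → s' ≤ m →
          (∫ r in t..s', (β r - if r ≤ m then ubar else β r)) = ∫ r in t..s', (β r - ubar) := by
        intro s' h1' h2'
        apply intervalIntegral.integral_congr
        intro r hr
        rw [Set.uIcc_of_le h1'] at hr
        have : r ≤ m := hr.2.trans h2'
        simp only [if_pos this]
      have key2 : ∀ s' : ℝ, m ≤ s' →
          (∫ r in m..s', (β r - if r ≤ m then ubar else β r)) = 0 := by
        intro s' h1'
        rw [intervalIntegral.integral_congr_ae (g := fun _ => (0 : ℝ)) ?_,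
          intervalIntegral.integral_zero]
        apply ae_of_all
        intro r hr
        rw [Set.uIoc_of_le h1'] at hr
        have : ¬ r ≤ m := not_le.2 hr.1
        simp only [if_neg this, sub_self]
      rcases le_total s m with hsm | hsm
      · have e : traj t β y (fun s => if s ≤ m then ubar else β s) s
            = y + ∫ r in t..s, (β r - ubar) := by
          rw [traj, key1 s hs.1 hsm]
        rw [Set.mem_Icc, e]
        have hnn1 : 0 ≤ ∫ r in t..s, (β r - ubar) := hnn t s le_rfl hs.1 hsm
        have hsplit : (∫ r in t..s, (β r - ubar)) + (∫ r in s..m, (β r - ubar)) = A :=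
          intervalIntegral.integral_add_adjacent_intervals (hbint t s) (hbint s m)
        have hnn2 : 0 ≤ ∫ r in s..m, (β r - ubar) := hnn s m hs.1 hsm le_rfl
        constructor <;> linarith
      · have e : traj t β y (fun s => if s ≤ m then ubar else β s) s = y + A := by
          rw [traj, ← intervalIntegral.integral_add_adjacent_intervals (huint t m) (huint m s),
            key1 m htm le_rfl, key2 s hsm, add_zero]
        rw [Set.mem_Icc, e]
        constructor <;> linarith
end
end
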